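/- arXiv:2312.16776 — 2 statements merged into one kernel-verified Lean document; each statement's English description precedes it below -/
import Mathlib

section
/- Let n ≥ 2 and let λ be a strict partition with at most n parts. The seminormal gl_n-crystal SetDecTab_n(λ), together with the operators e_1̄ and f_1̄, is a q_n-crystal: e_1̄ and f_1̄ map SetDecTab_n(λ) into SetDecTab_n(λ) ⊔ {0}; they commute with e_i and f_i and preserve the string lengths ε_i and φ_i for all 3 ≤ i ≤ n−1; and for T,U ∈ SetDecTab_n(λ) one has e_1̄(T) = U if and only if f_1̄(U) = T, in which case wt(U) = wt(T) + 𝐞_1 − 𝐞_2. -/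
open scoped Classical

/-! ## Shifted diagrams, hook words, decomposition tableaux -/

/-- A strict partition, given as its (strictly decreasing) list of positive parts. -/
def IsStrictPartition (lam : List ℕ) : Prop :=
  lam.Chain' (· > ·) ∧ ∀ p ∈ lam, 0 < p

/-- A partition (weakly decreasing list of positive parts). -/
def IsPartition (lam : List ℕ) : Prop :=
  lam.Chain' (· ≥ ·) ∧ ∀ p ∈ lam, 0 < p

/-- `(i, j)` (1-indexed row `i`, column `j`) is a box of the shifted diagram `SD_lam`. -/
def InSD (lam : List ℕ) (i j : ℕ) : Prop :=
  1 ≤ i ∧ i ≤ lam.length ∧ i ≤ j ∧ j < i + lam.getD (i - 1) 0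

/-- `(i, j)` is a box of the (unshifted) Young diagram of `lam`. -/
def InYD (lam : List ℕ) (i j : ℕ) : Prop :=
  1 ≤ i ∧ i ≤ lam.length ∧ 1 ≤ j ∧ j ≤ lam.getD (i - 1) 0

/-- The word given by row `i` (1-indexed) of a shifted tableau `T`, read left to right. -/
def rowWord (lam : List ℕ) (T : ℕ × ℕ → ℕ) (i : ℕ) : List ℕ :=
  (List.range (lam.getD (i - 1) 0)).map fun j => T (i, i + j)

/-- A hook word: a sequence of positive integers `w₁ ≥ ⋯ ≥ w_m < w_{m+1} < ⋯ < w_n`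
for some `m ∈ [n]`. -/
def IsHookWord (w : List ℕ) : Prop :=
  (∀ v ∈ w, 0 < v) ∧
  ∃ m, 1 ≤ m ∧ m ≤ w.length ∧
    (∀ j : ℕ, j + 1 < m → w.getD (j + 1) 0 ≤ w.getD j 0) ∧
    (∀ j : ℕ, m ≤ j + 1 → j + 1 < w.length → w.getD j 0 < w.getD (j + 1) 0)

/-- `r` is a hook subword of maximal length in `s`. -/
def IsMaxHookSubwordIn (r s : List ℕ) : Prop :=
  r.Sublist s ∧ IsHookWord r ∧
    ∀ t : List ℕ, t.Sublist s → IsHookWord t → t.length ≤ r.length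

/-- A (semistandard) decomposition tableau of shifted shape `lam`. -/
def IsDecompTab (lam : List ℕ) (T : ℕ × ℕ → ℕ) : Prop :=
  (∀ i, 1 ≤ i → i ≤ lam.length → IsHookWord (rowWord lam T i)) ∧
  (∀ i, 1 ≤ i → i + 1 ≤ lam.length →
    IsMaxHookSubwordIn (rowWord lam T i) (rowWord lam T (i + 1) ++ rowWord lam T i))

/-! ## Set-valued decomposition tableaux -/

/-- A set-valued decomposition tableau: boxes of `SD_lam` are filled by finite nonempty
sets of positive integers, all of whose distributions are decomposition tableaux. -/
def IsSetDecompTab (lam : List ℕ) (T : ℕ × ℕ → Finset ℕ) : Prop :=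
  (∀ i j, InSD lam i j → (T (i, j)).Nonempty ∧ 0 ∉ T (i, j)) ∧
  (∀ d : ℕ × ℕ → ℕ, (∀ i j, InSD lam i j → d (i, j) ∈ T (i, j)) → IsDecompTab lam d)

/-- Set-valued decomposition tableau whose every entry is contained in `{1, …, n}`. -/
def IsSetDecompTabN (n : ℕ) (lam : List ℕ) (T : ℕ × ℕ → Finset ℕ) : Prop :=
  IsSetDecompTab lam T ∧ ∀ i j, InSD lam i j → ∀ v ∈ T (i, j), v ≤ n

/-! ## Reverse row reading words -/

/-- The boxes of `SD_lam` in reverse row reading order: the first row read right to left,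
then the second row right to left, and so on. -/
def revrowBoxes (lam : List ℕ) : List (ℕ × ℕ) :=
  (List.range lam.length).flatMap fun r =>
    (List.range (lam.getD r 0)).reverse.map fun j => (r + 1, r + 1 + j)

/-- Position of a box in the reverse row reading order. -/
def boxIdx (lam : List ℕ) (b : ℕ × ℕ) : ℕ := (revrowBoxes lam).idxOf b

/-- The reverse row reading word of a set-valued tableau, with each letter labelled by
its box: entries within each box are listed in decreasing order. -/
def revrowEntries (lam : List ℕ) (T : ℕ × ℕ → Finset ℕ) : List ((ℕ × ℕ) × ℕ) :=
  (revrowBoxes lam).flatMap fun b => (((T b).sort (· ≤ ·)).reverse).map fun v => (b, v)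

/-- The reverse row reading word of a set-valued tableau. -/
def revrowWord (lam : List ℕ) (T : ℕ × ℕ → Finset ℕ) : List ℕ :=
  (revrowEntries lam T).map Prod.snd

/-- `wtSet lam T k` is the number of boxes of `T` whose entry contains `k`. -/
noncomputable def wtSet (lam : List ℕ) (T : ℕ × ℕ → Finset ℕ) (k : ℕ) : ℕ :=
  ((revrowBoxes lam).filter fun b => decide (k ∈ T b)).length

/-- `wtNum lam T k` is the number of boxes of an ordinary tableau `T` equal to `k`. -/
noncomputable def wtNum (lam : List ℕ) (T : ℕ × ℕ → ℕ) (k : ℕ) : ℕ :=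
  ((revrowBoxes lam).filter fun b => decide (T b = k)).length

/-! ## Parenthesis pairing: `i`-unpaired letters -/

/-- Number of unmatched `i+1`'s ( "(" ) after scanning `u` left to right,
where each `i` ( ")" ) cancels the most recent unmatched `i+1`. -/
def openCount (i : ℕ) (u : List ℕ) : ℕ :=
  u.foldl (fun acc a => if a = i + 1 then acc + 1 else if a = i then acc - 1 else acc) 0

/-- Number of unmatched `i`'s ( ")" ) after scanning `u` right to left,
where each `i+1` ( "(" ) cancels the nearest unmatched `i` to its right. -/
def closeCount (i : ℕ) (u : List ℕ) : ℕ :=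
  u.foldr (fun a acc => if a = i then acc + 1 else if a = i + 1 then acc - 1 else acc) 0

/-- Position `p` of `w` holds an `i`-unpaired letter equal to `i+1`. -/
def UnpairedHigh (i : ℕ) (w : List ℕ) (p : ℕ) : Prop :=
  p < w.length ∧ w.getD p 0 = i + 1 ∧ closeCount i (w.drop (p + 1)) = 0

/-- Position `p` of `w` holds an `i`-unpaired letter equal to `i`. -/
def UnpairedLow (i : ℕ) (w : List ℕ) (p : ℕ) : Prop :=
  p < w.length ∧ w.getD p 0 = i ∧ openCount i (w.take p) = 0

instance (i : ℕ) (w : List ℕ) (p : ℕ) : Decidable (UnpairedHigh i w p) := by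
  unfold UnpairedHigh; infer_instance

instance (i : ℕ) (w : List ℕ) (p : ℕ) : Decidable (UnpairedLow i w p) := by
  unfold UnpairedLow; infer_instance

/-- The number of `i`-unpaired letters equal to `i+1` in `w`. -/
def numUnpairedHigh (i : ℕ) (w : List ℕ) : ℕ :=
  ((List.range w.length).filter fun p => decide (UnpairedHigh i w p)).length

/-- The number of `i`-unpaired letters equal to `i` in `w`. -/
def numUnpairedLow (i : ℕ) (w : List ℕ) : ℕ :=
  ((List.range w.length).filter fun p => decide (UnpairedLow i w p)).length

/-! ## Iterated partial operators and string lengths -/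

/-- Iterate a partial operator, with the convention that `0` (i.e. `none`) is absorbing. -/
def iterOpt {α : Type*} (g : α → Option α) : ℕ → α → Option α
  | 0, a => some a
  | k + 1, a => (g a).bind (iterOpt g k)

/-- `m` is the exact string length `sup {k | g^k a ≠ 0}` of `a` under `g`. -/
def HasStringLen {α : Type*} (g : α → Option α) (a : α) (m : ℕ) : Prop :=
  iterOpt g m a ≠ none ∧ iterOpt g (m + 1) a = none

/-! ## The queer crystal operators on set-valued decomposition tableaux -/

/-- The raising crystal operator `e_i` on set-valued decomposition tableaux. -/
noncomputable def eCrystal (lam : List ℕ) (i : ℕ) (T : ℕ × ℕ → Finset ℕ) :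
    Option (ℕ × ℕ → Finset ℕ) :=
  if h : ∃ p, UnpairedHigh i (revrowWord lam T) p then
    let xy := ((revrowEntries lam T).getD (Nat.find h) ((0, 0), 0)).1
    let T1 := Function.update T xy (insert i ((T xy).erase (i + 1)))
    if IsSetDecompTab lam T1 then some T1
    else if _hab : ∃ m, m < boxIdx lam xy ∧ i ∈ T ((revrowBoxes lam).getD m (0, 0)) ∧
        i + 1 ∈ T ((revrowBoxes lam).getD m (0, 0)) then
      let m := Nat.findGreatest (fun m => m < boxIdx lam xy ∧
          i ∈ T ((revrowBoxes lam).getD m (0, 0)) ∧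
          i + 1 ∈ T ((revrowBoxes lam).getD m (0, 0))) (boxIdx lam xy)
      let ab := (revrowBoxes lam).getD m (0, 0)
      some (Function.update (Function.update T ab ((T ab).erase (i + 1))) xy
        (insert i (T xy)))
    else none
  else none

/-- The lowering crystal operator `f_i` on set-valued decomposition tableaux. -/
noncomputable def fCrystal (lam : List ℕ) (i : ℕ) (T : ℕ × ℕ → Finset ℕ) :
    Option (ℕ × ℕ → Finset ℕ) :=
  if _h : ∃ p, UnpairedLow i (revrowWord lam T) p then
    let p := Nat.findGreatest (fun p => UnpairedLow i (revrowWord lam T) p)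
      (revrowWord lam T).length
    let xy := ((revrowEntries lam T).getD p ((0, 0), 0)).1
    let T1 := Function.update T xy (insert (i + 1) ((T xy).erase i))
    if IsSetDecompTab lam T1 then some T1
    else if hab : ∃ m, boxIdx lam xy < m ∧ m < (revrowBoxes lam).length ∧
        i ∈ T ((revrowBoxes lam).getD m (0, 0)) ∧
        i + 1 ∈ T ((revrowBoxes lam).getD m (0, 0)) then
      let ab := (revrowBoxes lam).getD (Nat.find hab) (0, 0)
      some (Function.update (Function.update T ab ((T ab).erase i)) xy
        (insert (i + 1) (T xy)))
    else none
  else none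

/-- The queer raising operator `e_1̄` on set-valued decomposition tableaux. -/
noncomputable def eBarCrystal (lam : List ℕ) (T : ℕ × ℕ → Finset ℕ) :
    Option (ℕ × ℕ → Finset ℕ) :=
  if h : ∃ p, p < (revrowWord lam T).length ∧ (revrowWord lam T).getD p 0 = 2 ∧
      ∀ q < p, (revrowWord lam T).getD q 0 ≠ 1 then
    let xy := ((revrowEntries lam T).getD (Nat.find h) ((0, 0), 0)).1
    if 1 ∈ T xy then none
    else some (Function.update T xy (insert 1 ((T xy).erase 2)))
  else none

/-- The queer lowering operator `f_1̄` on set-valued decomposition tableaux. -/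
noncomputable def fBarCrystal (lam : List ℕ) (T : ℕ × ℕ → Finset ℕ) :
    Option (ℕ × ℕ → Finset ℕ) :=
  if h : ∃ p, p < (revrowWord lam T).length ∧ (revrowWord lam T).getD p 0 = 1 ∧
      ∀ q < p, (revrowWord lam T).getD q 0 ≠ 2 then
    let xy := ((revrowEntries lam T).getD (Nat.find h) ((0, 0), 0)).1
    some (Function.update T xy (insert 2 ((T xy).erase 1)))
  else none
/-! ## Multiset-valued decomposition tableaux -/

/-- A multiset-valued decomposition tableau in which only the entry `1` may repeat
within a box, all of whose distributions are decomposition tableaux. -/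
def IsMultisetDecompTab (lam : List ℕ) (T : ℕ × ℕ → Multiset ℕ) : Prop :=
  (∀ i j, InSD lam i j → T (i, j) ≠ 0 ∧ 0 ∉ T (i, j) ∧
      ∀ v : ℕ, v ≠ 1 → (T (i, j)).count v ≤ 1) ∧
  (∀ d : ℕ × ℕ → ℕ, (∀ i j, InSD lam i j → d (i, j) ∈ T (i, j)) → IsDecompTab lam d)

/-- Reverse row reading word of a multiset-valued tableau, with boxes recorded. -/
def revrowEntriesM (lam : List ℕ) (T : ℕ × ℕ → Multiset ℕ) : List ((ℕ × ℕ) × ℕ) :=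
  (revrowBoxes lam).flatMap fun b => (((T b).sort (· ≤ ·)).reverse).map fun v => (b, v)

/-- Reverse row reading word of a multiset-valued tableau. -/
def revrowWordM (lam : List ℕ) (T : ℕ × ℕ → Multiset ℕ) : List ℕ :=
  (revrowEntriesM lam T).map Prod.snd

/-- The operator `e*_1̄` on multiset-valued decomposition tableaux: if the first `2` of
the reverse row reading word occurs before every `1`, change it to a `1`. -/
noncomputable def eStarBar (lam : List ℕ) (T : ℕ × ℕ → Multiset ℕ) :
    Option (ℕ × ℕ → Multiset ℕ) :=
  if h : ∃ p, p < (revrowWordM lam T).length ∧ (revrowWordM lam T).getD p 0 = 2 ∧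
      ∀ q < p, (revrowWordM lam T).getD q 0 ≠ 1 then
    let b := ((revrowEntriesM lam T).getD (Nat.find h) ((0, 0), 0)).1
    some (Function.update T b (1 ::ₘ (T b).erase 2))
  else none

/-- The operator `f*_1̄` on multiset-valued decomposition tableaux: if the first `1` of
the reverse row reading word occurs before every `2`, change it to a `2`. -/
noncomputable def fStarBar (lam : List ℕ) (T : ℕ × ℕ → Multiset ℕ) :
    Option (ℕ × ℕ → Multiset ℕ) :=
  if h : ∃ p, p < (revrowWordM lam T).length ∧ (revrowWordM lam T).getD p 0 = 1 ∧
      ∀ q < p, (revrowWordM lam T).getD q 0 ≠ 2 then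
    let b := ((revrowEntriesM lam T).getD (Nat.find h) ((0, 0), 0)).1
    some (Function.update T b (2 ::ₘ (T b).erase 1))
  else none

/-! ## Linked `i`-words and square-root crystal operators -/

/-- Characters of a linked `i`-word: `(`, `)` and `-`. -/
inductive PChar : Type
  | op : PChar
  | cl : PChar
  | dash : PChar
  deriving DecidableEq

/-- The linked `i`-word of a set-valued tableau, with each character labelled by its box:
a box containing `i` but not `i+1` gives `)`, a box containing `i+1` but not `i` gives `(`,
and a box containing both gives `)-(`; boxes are read in reverse row reading order. -/
def tokens (lam : List ℕ) (i : ℕ) (T : ℕ × ℕ → Finset ℕ) : List (PChar × (ℕ × ℕ)) :=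
  (revrowBoxes lam).flatMap fun b =>
    if i ∈ T b ∧ i + 1 ∈ T b then [(PChar.cl, b), (PChar.dash, b), (PChar.op, b)]
    else if i ∈ T b then [(PChar.cl, b)]
    else if i + 1 ∈ T b then [(PChar.op, b)]
    else []

/-- Unmatched `(`s after scanning left to right (ignoring dashes). -/
def openCnt (u : List PChar) : ℕ :=
  u.foldl (fun acc a => match a with
    | PChar.op => acc + 1
    | PChar.cl => acc - 1
    | PChar.dash => acc) 0

/-- Unmatched `)`s after scanning right to left (ignoring dashes). -/
def closeCnt (u : List PChar) : ℕ :=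
  u.foldr (fun a acc => match a with
    | PChar.cl => acc + 1
    | PChar.op => acc - 1
    | PChar.dash => acc) 0

/-- Position `p` holds an unpaired `(`. -/
def UnpairedOp (ws : List PChar) (p : ℕ) : Prop :=
  p < ws.length ∧ ws.getD p PChar.dash = PChar.op ∧ closeCnt (ws.drop (p + 1)) = 0

/-- Position `p` holds an unpaired `)`. -/
def UnpairedCl (ws : List PChar) (p : ℕ) : Prop :=
  p < ws.length ∧ ws.getD p PChar.dash = PChar.cl ∧ openCnt (ws.take p) = 0

/-- A fully matched (balanced) parenthesis word, ignoring dashes. -/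
def BalancedP (u : List PChar) : Prop :=
  u.count PChar.op = u.count PChar.cl ∧
  ∀ k, (u.take k).count PChar.cl ≤ (u.take k).count PChar.op

/-- The `(` at position `a` is matched with the `)` at position `b`. -/
def MatchedPair (ws : List PChar) (a b : ℕ) : Prop :=
  a < b ∧ b < ws.length ∧ ws.getD a PChar.dash = PChar.op ∧
  ws.getD b PChar.dash = PChar.cl ∧ BalancedP ((ws.drop (a + 1)).take (b - (a + 1)))

/-- Generating relation for equivalence classes of characters: a matched pair together
with everything between them lies in one class, and so do the three characters `)-(`
coming from a single box. -/
def LinkRel (ws : List PChar) (p q : ℕ) : Prop :=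
  (∃ a b, MatchedPair ws a b ∧ a ≤ p ∧ p ≤ b ∧ a ≤ q ∧ q ≤ b) ∨
  (∃ d, 1 ≤ d ∧ d + 1 < ws.length ∧ ws.getD d PChar.op = PChar.dash ∧
    (p = d - 1 ∨ p = d ∨ p = d + 1) ∧ (q = d - 1 ∨ q = d ∨ q = d + 1))

/-- Two positions lie in the same equivalence class of the linked `i`-word. -/
def SameClass (ws : List PChar) : ℕ → ℕ → Prop := Relation.ReflTransGen (LinkRel ws)

/-- The class of position `p` contains an unpaired `(`. -/
def HasUnpairedOpIn (ws : List PChar) (p : ℕ) : Prop :=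
  ∃ q, SameClass ws p q ∧ UnpairedOp ws q

/-- The class of position `p` contains an unpaired `)`. -/
def HasUnpairedClIn (ws : List PChar) (p : ℕ) : Prop :=
  ∃ q, SameClass ws p q ∧ UnpairedCl ws q

/-- Position `p` belongs to a left form: a class with no unpaired `)` that ends
with an unpaired `(`. -/
def IsLeftFormAt (ws : List PChar) (p : ℕ) : Prop :=
  p < ws.length ∧ HasUnpairedOpIn ws p ∧ ¬ HasUnpairedClIn ws p

/-- Position `p` belongs to a right form: a class with no unpaired `(` that starts
with an unpaired `)`. -/
def IsRightFormAt (ws : List PChar) (p : ℕ) : Prop :=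
  p < ws.length ∧ HasUnpairedClIn ws p ∧ ¬ HasUnpairedOpIn ws p

/-- The square-root raising operator `e'_i` on set-valued decomposition tableaux. -/
noncomputable def eSqrt (lam : List ℕ) (i : ℕ) (T : ℕ × ℕ → Finset ℕ) :
    Option (ℕ × ℕ → Finset ℕ) :=
  let tk := tokens lam i T
  let ws := tk.map Prod.fst
  if hc : ∃ p, UnpairedOp ws p ∧ HasUnpairedClIn ws p then
    -- the `)-(` at the end of the combined form: remove `i+1` from its box
    let b := (tk.getD (Nat.find hc) (PChar.op, (0, 0))).2
    some (Function.update T b ((T b).erase (i + 1)))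
  else if hl : ∃ p, IsLeftFormAt ws p then
    -- the `(` at the start of the first left form: add `i` to its box
    let b := (tk.getD (Nat.find hl) (PChar.op, (0, 0))).2
    some (Function.update T b (insert i (T b)))
  else none

/-- The square-root lowering operator `f'_i` on set-valued decomposition tableaux. -/
noncomputable def fSqrt (lam : List ℕ) (i : ℕ) (T : ℕ × ℕ → Finset ℕ) :
    Option (ℕ × ℕ → Finset ℕ) :=
  let tk := tokens lam i T
  let ws := tk.map Prod.fst
  if hc : ∃ p, UnpairedCl ws p ∧ HasUnpairedOpIn ws p then
    -- the `)-(` at the beginning of the combined form: remove `i` from its box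
    let b := (tk.getD (Nat.find hc) (PChar.op, (0, 0))).2
    some (Function.update T b ((T b).erase i))
  else if _hr : ∃ p, IsRightFormAt ws p then
    -- the `)` at the end of the last right form: add `i+1` to its box
    let b := (tk.getD (Nat.findGreatest (fun p => IsRightFormAt ws p) ws.length)
        (PChar.op, (0, 0))).2
    some (Function.update T b (insert (i + 1) (T b)))
  else none

/-- The square-root queer raising operator `e'_1̄`. -/
noncomputable def eBarSqrt (lam : List ℕ) (T : ℕ × ℕ → Finset ℕ) :
    Option (ℕ × ℕ → Finset ℕ) :=
  if h : ∃ m, m < (revrowBoxes lam).length ∧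
      (1 ∈ T ((revrowBoxes lam).getD m (0, 0)) ∨ 2 ∈ T ((revrowBoxes lam).getD m (0, 0))) then
    let b := (revrowBoxes lam).getD (Nat.find h) (0, 0)
    if 1 ∈ T b then
      if 2 ∈ T b then some (Function.update T b ((T b).erase 2)) else none
    else some (Function.update T b (insert 1 (T b)))
  else none

/-- The square-root queer lowering operator `f'_1̄`. -/
noncomputable def fBarSqrt (lam : List ℕ) (T : ℕ × ℕ → Finset ℕ) :
    Option (ℕ × ℕ → Finset ℕ) :=
  if h : ∃ m, m < (revrowBoxes lam).length ∧
      (1 ∈ T ((revrowBoxes lam).getD m (0, 0)) ∨ 2 ∈ T ((revrowBoxes lam).getD m (0, 0))) then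
    let b := (revrowBoxes lam).getD (Nat.find h) (0, 0)
    if 2 ∈ T b then
      if 1 ∈ T b then some (Function.update T b ((T b).erase 1)) else none
    else some (Function.update T b (insert 2 (T b)))
  else none
/-! ## Abstract √gl_n- and √q_n-crystals -/

/-- The data of a crystal-like structure: a weight map (coordinates `1, …, n` are the
relevant ones) and partial raising/lowering operators indexed by `i ∈ [n-1]`. -/
structure SqGlData (B : Type*) where
  wt : B → ℕ → ℕ
  e : ℕ → B → Option B
  f : ℕ → B → Option B

/-- The axioms of a `√gl_n`-crystal. -/
def IsSqGlCrystal {B : Type*} (n : ℕ) (D : SqGlData B) : Prop :=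
  (∀ i, 1 ≤ i → i < n → ∀ b, ∃ ep ph : ℕ,
      HasStringLen (D.e i) b ep ∧ HasStringLen (D.f i) b ph ∧
      Even (ep + ph) ∧ (ph : ℤ) - ep = 2 * ((D.wt b i : ℤ) - D.wt b (i + 1))) ∧
  (∀ i, 1 ≤ i → i < n → ∀ b c, D.e i b = some c ↔ D.f i c = some b) ∧
  (∀ i, 1 ≤ i → i < n → ∀ b c, D.e i b = some c → ∀ ep, HasStringLen (D.e i) b ep →
      ∀ k, (D.wt c k : ℤ) - D.wt b k =
        if Even ep then (if k = i then 1 else 0) else (if k = i + 1 then -1 else 0))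

/-- The data of a queer crystal-like structure. -/
structure SqQData (B : Type*) extends SqGlData B where
  ebar : B → Option B
  fbar : B → Option B

/-- The axioms of a `√q_n`-crystal. -/
def IsSqQnCrystal {B : Type*} (n : ℕ) (D : SqQData B) : Prop :=
  IsSqGlCrystal n D.toSqGlData ∧
  (∀ i, 3 ≤ i → i < n → ∀ b,
      (D.e i b).bind D.ebar = (D.ebar b).bind (D.e i) ∧
      (D.f i b).bind D.ebar = (D.ebar b).bind (D.f i) ∧
      (D.e i b).bind D.fbar = (D.fbar b).bind (D.e i) ∧
      (D.f i b).bind D.fbar = (D.fbar b).bind (D.f i)) ∧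
  (∀ i, 3 ≤ i → i < n → ∀ b c, (D.ebar b = some c ∨ D.fbar b = some c) →
      (∀ m, HasStringLen (D.e i) b m ↔ HasStringLen (D.e i) c m) ∧
      (∀ m, HasStringLen (D.f i) b m ↔ HasStringLen (D.f i) c m)) ∧
  (∀ b, ∃ ep ph : ℕ, HasStringLen D.ebar b ep ∧ HasStringLen D.fbar b ph ∧
      ep + ph = (if D.wt b 1 = 0 ∧ D.wt b 2 = 0 then 0 else 2)) ∧
  (∀ b c, D.ebar b = some c ↔ D.fbar c = some b) ∧
  (∀ b c, D.ebar b = some c → ∀ ep, HasStringLen D.ebar b ep →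
      ∀ k, (D.wt c k : ℤ) - D.wt b k =
        if ep = 2 then (if k = 1 then 1 else 0) else (if k = 2 then -1 else 0))

/-- The square of a partial operator. -/
def sqOp {B : Type*} (g : B → Option B) : B → Option B := fun b => (g b).bind g

/-- The axioms of a (seminormal) `gl_n`-crystal for given weight map and operators. -/
def GlSeminormalAxioms {B : Type*} (n : ℕ) (wt : B → ℕ → ℕ)
    (E F : ℕ → B → Option B) : Prop :=
  (∀ i, 1 ≤ i → i < n → ∀ b c, E i b = some c ↔ F i c = some b) ∧
  (∀ i, 1 ≤ i → i < n → ∀ b c, E i b = some c →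
      ∀ k, (wt c k : ℤ) - wt b k = (if k = i then 1 else 0) - (if k = i + 1 then 1 else 0)) ∧
  (∀ i, 1 ≤ i → i < n → ∀ b, ∃ ep ph : ℕ,
      HasStringLen (E i) b ep ∧ HasStringLen (F i) b ph ∧
      (ph : ℤ) - ep = (wt b i : ℤ) - wt b (i + 1))

/-- The additional axioms making a `gl_n`-crystal into a `q_n`-crystal. -/
def QnExtraAxioms {B : Type*} (n : ℕ) (wt : B → ℕ → ℕ)
    (E F : ℕ → B → Option B) (Eb Fb : B → Option B) : Prop :=
  (∀ i, 3 ≤ i → i < n → ∀ b,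
      (E i b).bind Eb = (Eb b).bind (E i) ∧ (F i b).bind Eb = (Eb b).bind (F i) ∧
      (E i b).bind Fb = (Fb b).bind (E i) ∧ (F i b).bind Fb = (Fb b).bind (F i)) ∧
  (∀ i, 3 ≤ i → i < n → ∀ b c, (Eb b = some c ∨ Fb b = some c) →
      (∀ m, HasStringLen (E i) b m ↔ HasStringLen (E i) c m) ∧
      (∀ m, HasStringLen (F i) b m ↔ HasStringLen (F i) c m)) ∧
  (∀ b c, Eb b = some c ↔ Fb c = some b) ∧
  (∀ b c, Eb b = some c →
      ∀ k, (wt c k : ℤ) - wt b k = (if k = 1 then 1 else 0) - (if k = 2 then 1 else 0))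

/-- String length as a function (the supremum of the set of iterates that survive). -/
noncomputable def strLen {B : Type*} (g : B → Option B) (b : B) : ℕ :=
  sSup {k | iterOpt g k b ≠ none}

/-- Tensor product of `√gl_n`-crystal data. -/
noncomputable def tensorGl {B C : Type*} (DB : SqGlData B) (DC : SqGlData C) :
    SqGlData (B × C) where
  wt := fun bc k => DB.wt bc.1 k + DC.wt bc.2 k
  e := fun i bc =>
    if strLen (DB.e i) bc.1 ≤ strLen (DC.f i) bc.2 then
      (DC.e i bc.2).map fun c' => (bc.1, c')
    else (DB.e i bc.1).map fun b' => (b', bc.2)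
  f := fun i bc =>
    if strLen (DB.e i) bc.1 < strLen (DC.f i) bc.2 then
      (DC.f i bc.2).map fun c' => (bc.1, c')
    else (DB.f i bc.1).map fun b' => (b', bc.2)

/-- Tensor product of `√q_n`-crystal data. -/
noncomputable def tensorQ {B C : Type*} (DB : SqQData B) (DC : SqQData C) :
    SqQData (B × C) where
  toSqGlData := tensorGl DB.toSqGlData DC.toSqGlData
  ebar := fun bc =>
    if DB.wt bc.1 1 = 0 ∧ DB.wt bc.1 2 = 0 then (DC.ebar bc.2).map fun c' => (bc.1, c')
    else (DB.ebar bc.1).map fun b' => (b', bc.2)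
  fbar := fun bc =>
    if DB.wt bc.1 1 = 0 ∧ DB.wt bc.1 2 = 0 then (DC.fbar bc.2).map fun c' => (bc.1, c')
    else (DB.fbar bc.1).map fun b' => (b', bc.2)
/-! ## Generating functions -/

/-- A set-valued decomposition tableau, normalized to be empty off the shifted diagram. -/
def IsNormalizedSVDT (lam : List ℕ) (T : ℕ × ℕ → Finset ℕ) : Prop :=
  IsSetDecompTab lam T ∧ ∀ i j, ¬ InSD lam i j → T (i, j) = ∅

/-- A decomposition tableau, normalized to be `0` off the shifted diagram. -/
def IsNormalizedDT (lam : List ℕ) (T : ℕ × ℕ → ℕ) : Prop :=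
  IsDecompTab lam T ∧ ∀ i j, ¬ InSD lam i j → T (i, j) = 0

/-- `Σ_λ = ∑_{T ∈ SetDecTab(λ)} x^T` as a formal power series; variable `k` stands for
`x_{k+1}`, i.e. records occurrences of the letter `k+1`. -/
noncomputable def SigmaLam (lam : List ℕ) : MvPowerSeries ℕ ℤ :=
  fun d => (Set.ncard
    {T : ℕ × ℕ → Finset ℕ | IsNormalizedSVDT lam T ∧ ∀ k, wtSet lam T (k + 1) = d k} : ℤ)

/-- The Schur `P`-function `P_λ = ∑_{T ∈ DecTab(λ)} x^T` as a formal power series. -/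
noncomputable def SchurPfun (lam : List ℕ) : MvPowerSeries ℕ ℤ :=
  fun d => (Set.ncard
    {T : ℕ × ℕ → ℕ | IsNormalizedDT lam T ∧ ∀ k, wtNum lam T (k + 1) = d k} : ℤ)

/-! ## Marked (primed) shifted tableaux and `GP`-functions.
We encode the marked alphabet `1' < 1 < 2' < 2 < ⋯` into `ℕ` by `k' ↦ 2k - 1` and
`k ↦ 2k`, so primed letters are odd and the natural order is preserved. -/

/-- A semistandard marked shifted tableau (as a distribution): weakly increasing rows and
columns, no primed (odd) letter repeated in a row, no unprimed (even) letter repeated in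
a column. -/
def IsSemistandardMarked (lam : List ℕ) (d : ℕ × ℕ → ℕ) : Prop :=
  (∀ i j, InSD lam i j → InSD lam i (j + 1) → d (i, j) ≤ d (i, j + 1)) ∧
  (∀ i j, InSD lam i j → InSD lam (i + 1) j → d (i, j) ≤ d (i + 1, j)) ∧
  (∀ i j j', InSD lam i j → InSD lam i j' → j < j' → d (i, j) = d (i, j') →
    Even (d (i, j))) ∧
  (∀ i i' j, InSD lam i j → InSD lam i' j → i < i' → d (i, j) = d (i', j) →
    Odd (d (i, j)))

/-- A semistandard set-valued shifted tableau in the marked alphabet, with no primed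
letters on the main diagonal. -/
def IsSetSSMarkedShifted (lam : List ℕ) (T : ℕ × ℕ → Finset ℕ) : Prop :=
  (∀ i j, InSD lam i j → (T (i, j)).Nonempty ∧ ∀ v ∈ T (i, j), 1 ≤ v) ∧
  (∀ i, InSD lam i i → ∀ v ∈ T (i, i), Even v) ∧
  (∀ d : ℕ × ℕ → ℕ, (∀ i j, InSD lam i j → d (i, j) ∈ T (i, j)) →
    IsSemistandardMarked lam d)

/-- `wtMarked lam T k` is the total number of occurrences of `k` or `k'` in `T`. -/
noncomputable def wtMarked (lam : List ℕ) (T : ℕ × ℕ → Finset ℕ) (k : ℕ) : ℕ :=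
  ((revrowBoxes lam).map fun b =>
    ((T b).filter fun v => v = 2 * k - 1 ∨ v = 2 * k).card).sum

/-- The K-theoretic Schur `P`-function `GP_λ` as a formal power series; variable `k`
stands for `x_{k+1}`. -/
noncomputable def GPfun (lam : List ℕ) : MvPowerSeries ℕ ℤ :=
  fun d => (Set.ncard
    {T : ℕ × ℕ → Finset ℕ | IsSetSSMarkedShifted lam T ∧
      (∀ i j, ¬ InSD lam i j → T (i, j) = ∅) ∧
      ∀ k, wtMarked lam T (k + 1) = d k} : ℤ)

/-! ## Polynomial versions (variables `x_1, …, x_n`, i.e. `X 1, …, X n`) -/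

/-- The boxes of the (unshifted) Young diagram of `lam`, listed row by row. -/
def YDboxes (lam : List ℕ) : List (ℕ × ℕ) :=
  (List.range lam.length).flatMap fun r =>
    (List.range (lam.getD r 0)).map fun j => (r + 1, j + 1)

/-- A semistandard (unshifted) Young tableau: rows weakly increase, columns strictly
increase. -/
def IsSemistandardYT (lam : List ℕ) (d : ℕ × ℕ → ℕ) : Prop :=
  (∀ i j, InYD lam i j → InYD lam i (j + 1) → d (i, j) ≤ d (i, j + 1)) ∧
  (∀ i j, InYD lam i j → InYD lam (i + 1) j → d (i, j) < d (i + 1, j))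

/-- A semistandard set-valued (unshifted) tableau with entries in `{1, …, n}`,
normalized off the diagram. -/
def IsSetSSYT (n : ℕ) (lam : List ℕ) (T : ℕ × ℕ → Finset ℕ) : Prop :=
  (∀ i j, InYD lam i j → (T (i, j)).Nonempty ∧ ∀ v ∈ T (i, j), 1 ≤ v ∧ v ≤ n) ∧
  (∀ i j, ¬ InYD lam i j → T (i, j) = ∅) ∧
  (∀ d : ℕ × ℕ → ℕ, (∀ i j, InYD lam i j → d (i, j) ∈ T (i, j)) → IsSemistandardYT lam d)

/-- The symmetric Grothendieck polynomial `G_λ(x_1, …, x_n)`. -/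
noncomputable def Gpoly (n : ℕ) (lam : List ℕ) : MvPolynomial ℕ ℤ :=
  ∑ᶠ T ∈ {T : ℕ × ℕ → Finset ℕ | IsSetSSYT n lam T},
    ((YDboxes lam).map fun b =>
      ∏ v ∈ T b, (MvPolynomial.X v : MvPolynomial ℕ ℤ)).prod

/-- A semistandard set-valued marked shifted tableau with letters at most `n`,
normalized off the diagram. -/
def IsSetSSMarkedShiftedN (n : ℕ) (lam : List ℕ) (T : ℕ × ℕ → Finset ℕ) : Prop :=
  IsSetSSMarkedShifted lam T ∧ (∀ i j, ¬ InSD lam i j → T (i, j) = ∅) ∧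
  ∀ i j, InSD lam i j → ∀ v ∈ T (i, j), v ≤ 2 * n

/-- The K-theoretic Schur `P`-polynomial `GP_λ(x_1, …, x_n)`. -/
noncomputable def GPpoly (n : ℕ) (lam : List ℕ) : MvPolynomial ℕ ℤ :=
  ∑ᶠ T ∈ {T : ℕ × ℕ → Finset ℕ | IsSetSSMarkedShiftedN n lam T},
    ((revrowBoxes lam).map fun b =>
      ∏ v ∈ T b, (MvPolynomial.X ((v + 1) / 2) : MvPolynomial ℕ ℤ)).prod

/-- The character of the `m`-th tensor power of the standard `√q_n`-crystal, whose
elements are the nonempty subsets of `{1, …, n}` with weight the indicator vector. -/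
noncomputable def standardChar (n m : ℕ) : MvPolynomial ℕ ℤ :=
  ∑ b : Fin m → {S : Finset (Fin n) // S.Nonempty},
    ∏ j : Fin m, ∏ k ∈ (b j).1, (MvPolynomial.X ((k : ℕ) + 1) : MvPolynomial ℕ ℤ)

/-! ### Auxiliary: hook word middle-letter lemma -/

def PairsDec (u : List ℕ) : Prop := ∀ j, j + 1 < u.length → u.getD (j+1) 0 ≤ u.getD j 0
def PairsInc (v : List ℕ) : Prop := ∀ j, j + 1 < v.length → v.getD j 0 < v.getD (j+1) 0

lemma getD_mem_of_lt {l : List ℕ} {j : ℕ} (h : j < l.length) : l.getD j 0 ∈ l := by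
  rw [List.getD_eq_getElem l 0 h]; exact List.getElem_mem h

lemma wget_lt {u v : List ℕ} {a j : ℕ} (h : j < u.length) :
    (u ++ a :: v).getD j 0 = u.getD j 0 := List.getD_append _ _ _ _ h

lemma wget_eq {u v : List ℕ} {a j : ℕ} (h : j = u.length) : (u ++ a :: v).getD j 0 = a := by
  subst h
  rw [List.getD_append_right _ _ _ _ le_rfl, Nat.sub_self]; rfl

lemma wget_gt {u v : List ℕ} {a j : ℕ} (h : u.length < j) :
    (u ++ a :: v).getD j 0 = v.getD (j - u.length - 1) 0 := by
  rw [List.getD_append_right _ _ _ _ (le_of_lt h)]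
  rcases Nat.exists_eq_add_of_lt h with ⟨m, rfl⟩
  have : u.length + m + 1 - u.length = m + 1 := by omega
  rw [this, List.getD_cons_succ]
  congr 1

lemma wlen {u v : List ℕ} {a : ℕ} : (u ++ a :: v).length = u.length + 1 + v.length := by
  simp [List.length_append]; omega

lemma hw_mid {u v : List ℕ} {a : ℕ} (hu : ∀ x ∈ u, 1 ≤ x) (hv : ∀ x ∈ v, 3 ≤ x)
    (ha1 : 1 ≤ a) (ha2 : a ≤ 2) :
    IsHookWord (u ++ a :: v) ↔ PairsDec u ∧ PairsInc v := by
  constructor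
  · rintro ⟨hpos, m, hm1, hmL, hdec, hinc⟩
    rw [wlen] at hmL
    constructor
    · intro j hj
      by_cases hjm : j + 1 < m
      · have := hdec j hjm
        rwa [wget_lt (by omega), wget_lt (by omega)] at this
      · exfalso
        have hk2 : 2 ≤ u.length := by omega
        have h1 : (u ++ a :: v).getD (u.length-1) 0 < (u ++ a :: v).getD (u.length-1+1) 0 :=
          hinc (u.length-1) (by omega) (by rw [wlen]; omega)
        have h2 : (u ++ a :: v).getD (u.length-2) 0 < (u ++ a :: v).getD (u.length-2+1) 0 :=
          hinc (u.length-2) (by omega) (by rw [wlen]; omega)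
        rw [wget_lt (by omega), wget_eq (by omega)] at h1
        rw [wget_lt (by omega), wget_lt (by omega)] at h2
        have g1 : 1 ≤ u.getD (u.length-1) 0 := hu _ (getD_mem_of_lt (by omega))
        have g2 : 1 ≤ u.getD (u.length-2) 0 := hu _ (getD_mem_of_lt (by omega))
        have e : u.length - 2 + 1 = u.length - 1 := by omega
        rw [e] at h2
        omega
    · intro j hj
      have hvne : 0 < v.length := by omega
      have hmk : m ≤ u.length + 1 := by
        by_contra hcon
        have h3 := hdec u.length (by omega)
        rw [wget_eq rfl, wget_gt (by omega)] at h3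
        have g : 3 ≤ v.getD (u.length + 1 - u.length - 1) 0 := hv _ (getD_mem_of_lt (by omega))
        omega
      have h4 := hinc (u.length + 1 + j) (by omega) (by rw [wlen]; omega)
      rw [wget_gt (by omega), wget_gt (by omega)] at h4
      have e1 : u.length + 1 + j - u.length - 1 = j := by omega
      have e2 : u.length + 1 + j + 1 - u.length - 1 = j + 1 := by omega
      rwa [e1, e2] at h4
  · rintro ⟨hdec, hinc⟩
    constructor
    · intro x hx
      rcases List.mem_append.1 hx with h | h
      · exact lt_of_lt_of_le Nat.zero_lt_one (hu _ h)
      · rcases List.mem_cons.1 h with rfl | h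
        · omega
        · have := hv _ h; omega
    · by_cases hC : u.length ≠ 0 ∧ u.getD (u.length-1) 0 < a
      · refine ⟨u.length, by omega, by rw [wlen]; omega, ?_, ?_⟩
        · intro j hj
          rw [wget_lt (by omega), wget_lt (by omega)]
          exact hdec j (by omega)
        · intro j hj1 hj2
          rw [wlen] at hj2
          have hu1 : u.getD (u.length-1) 0 = 1 := by
            have := hu _ (getD_mem_of_lt (show u.length - 1 < u.length by omega))
            omega
          have ha2' : a = 2 := by omega
          rcases Nat.lt_trichotomy j u.length with h | h | h
          · have hjk : j = u.length - 1 := by omega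
            subst hjk
            rw [wget_lt (by omega), wget_eq (by omega), hu1]
            omega
          · rw [wget_eq h, wget_gt (by omega)]
            have : 3 ≤ v.getD (j + 1 - u.length - 1) 0 := by
              apply hv; apply getD_mem_of_lt; omega
            omega
          · rw [wget_gt (by omega), wget_gt (by omega)]
            have e2 : j + 1 - u.length - 1 = (j - u.length - 1) + 1 := by omega
            rw [e2]
            exact hinc _ (by omega)
      · refine ⟨u.length + 1, by omega, by rw [wlen]; omega, ?_, ?_⟩
        · intro j hj
          rcases Nat.lt_trichotomy (j+1) u.length with h | h | h
          · rw [wget_lt (by omega), wget_lt (by omega)]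
            exact hdec j (by omega)
          · rw [wget_eq h, wget_lt (by omega)]
            push_neg at hC
            have hj' : j = u.length - 1 := by omega
            rw [hj']
            exact hC (by omega)
          · omega
        · intro j hj1 hj2
          rw [wlen] at hj2
          rcases Nat.lt_trichotomy j u.length with h | h | h
          · omega
          · rw [wget_eq h, wget_gt (by omega)]
            have : 3 ≤ v.getD (j + 1 - u.length - 1) 0 := by
              apply hv; apply getD_mem_of_lt; omega
            omega
          · rw [wget_gt (by omega), wget_gt (by omega)]
            have e2 : j + 1 - u.length - 1 = (j - u.length - 1) + 1 := by omega
            rw [e2]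
            exact hinc _ (by omega)
/-! ### Row word splitting -/

lemma rowWord_length {lam : List ℕ} {d : ℕ × ℕ → ℕ} {i : ℕ} :
    (rowWord lam d i).length = lam.getD (i-1) 0 := by simp [rowWord]

lemma rowWord_update_ne {lam : List ℕ} {d : ℕ × ℕ → ℕ} {r c b i : ℕ} (h : i ≠ r) :
    rowWord lam (Function.update d (r, c) b) i = rowWord lam d i := by
  unfold rowWord
  apply List.map_congr_left
  intro j _
  exact Function.update_of_ne (by simp [Prod.ext_iff]; intro hir; omega) _ _

lemma rowWord_split {lam : List ℕ} {d : ℕ × ℕ → ℕ} {r c : ℕ}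
    (h1 : r ≤ c) (h2 : c < r + lam.getD (r-1) 0) :
    rowWord lam d r =
      ((List.range (c - r)).map fun j => d (r, r + j)) ++ d (r, c) ::
        ((List.range (lam.getD (r-1) 0 - (c - r) - 1)).map fun t => d (r, c + 1 + t)) := by
  unfold rowWord
  have hL : lam.getD (r-1) 0 = (c - r + 1) + (lam.getD (r-1) 0 - (c - r) - 1) := by omega
  conv_lhs => rw [hL]
  rw [List.range_add, List.map_append, List.range_succ, List.map_append, List.map_map]
  have e1 : r + (c - r) = c := by omega
  have e2 : ((fun j => d (r, r + j)) ∘ fun x => c - r + 1 + x) =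
      fun t => d (r, c + 1 + t) := by
    funext x; simp only [Function.comp]; congr 2; omega
  rw [e2]
  simp [e1]

/-! ### Maximality transfer -/

lemma max_transfer {U V : List ℕ} {a b m : ℕ}
    (hU : ∀ x ∈ U, 1 ≤ x) (hV : ∀ x ∈ V, 3 ≤ x)
    (ha1 : 1 ≤ a) (ha2 : a ≤ 2) (hb1 : 1 ≤ b) (hb2 : b ≤ 2)
    (hbound : ∀ t, t.Sublist (U ++ a :: V) → IsHookWord t → t.length ≤ m) :
    ∀ t, t.Sublist (U ++ b :: V) → IsHookWord t → t.length ≤ m := by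
  intro t ht hhook
  rcases List.sublist_append_iff.mp ht with ⟨t1, t2, rfl, h1, h2⟩
  rcases List.sublist_cons_iff.mp h2 with h2' | ⟨t3, rfl, h3⟩
  · refine hbound _ ((h1.append h2').trans ?_) hhook
    exact List.Sublist.append (List.Sublist.refl U) (List.sublist_cons_self a V)
  · have hx1 : ∀ x ∈ t1, 1 ≤ x := fun x hx => hU x (h1.subset hx)
    have hx3 : ∀ x ∈ t3, 3 ≤ x := fun x hx => hV x (h3.subset hx)
    have hp := (hw_mid hx1 hx3 hb1 hb2).mp hhook
    have hhook' := (hw_mid hx1 hx3 ha1 ha2).mpr hp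
    have hsub : (t1 ++ a :: t3).Sublist (U ++ a :: V) :=
      h1.append (List.cons_sublist_cons.mpr h3)
    have := hbound _ hsub hhook'
    simpa using this

/-! ### The swap lemma for ordinary decomposition tableaux -/

lemma decomp_update_mid {lam : List ℕ} {d : ℕ × ℕ → ℕ} {r c a b : ℕ}
    (hin : InSD lam r c)
    (ha1 : 1 ≤ a) (ha2 : a ≤ 2) (hb1 : 1 ≤ b) (hb2 : b ≤ 2)
    (hda : d (r, c) = a)
    (hpos : ∀ i j, InSD lam i j → 1 ≤ d (i, j))
    (hright3 : ∀ c', c < c' → InSD lam r c' → 3 ≤ d (r, c'))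
    (habove3 : ∀ c', InSD lam (r-1) c' → 3 ≤ d (r-1, c'))
    (hd : IsDecompTab lam d) :
    IsDecompTab lam (Function.update d (r, c) b) := by
  obtain ⟨hr1, hr2, hrc, hcb⟩ := hin
  have hsp := rowWord_split (lam := lam) (d := d) hrc hcb
  have hsp' := rowWord_split (lam := lam) (d := Function.update d (r, c) b) hrc hcb
  set u := (List.range (c - r)).map fun j => d (r, r + j) with hu_def
  set v := (List.range (lam.getD (r-1) 0 - (c - r) - 1)).map fun t => d (r, c + 1 + t) with hv_def
  have hueq : ((List.range (c - r)).map fun j => Function.update d (r, c) b (r, r + j)) = u := by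
    apply List.map_congr_left
    intro j hj
    rw [List.mem_range] at hj
    exact Function.update_of_ne (by simp [Prod.ext_iff]; omega) _ _
  have hveq : ((List.range (lam.getD (r-1) 0 - (c - r) - 1)).map
      fun t => Function.update d (r, c) b (r, c + 1 + t)) = v := by
    apply List.map_congr_left
    intro t _
    exact Function.update_of_ne (by simp [Prod.ext_iff]; omega) _ _
  rw [hueq, hveq, Function.update_self] at hsp'
  rw [hda] at hsp
  -- facts about values
  have hInSD_right : ∀ j, j < c - r → InSD lam r (r + j) := by
    intro j hj; exact ⟨hr1, hr2, by omega, by omega⟩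
  have hu1 : ∀ x ∈ u, 1 ≤ x := by
    intro x hx
    rw [hu_def, List.mem_map] at hx
    obtain ⟨j, hj, rfl⟩ := hx
    rw [List.mem_range] at hj
    exact hpos _ _ (hInSD_right j hj)
  have hv3 : ∀ x ∈ v, 3 ≤ x := by
    intro x hx
    rw [hv_def, List.mem_map] at hx
    obtain ⟨t, ht, rfl⟩ := hx
    rw [List.mem_range] at ht
    exact hright3 _ (by omega) ⟨hr1, hr2, by omega, by omega⟩
  have hrow_r : IsHookWord (rowWord lam (Function.update d (r, c) b) r) := by
    rw [hsp']
    exact (hw_mid hu1 hv3 hb1 hb2).mpr ((hw_mid hu1 hv3 ha1 ha2).mp (by rw [← hsp]; exact hd.1 r hr1 hr2))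
  constructor
  · intro i hi1 hi2
    by_cases hir : i = r
    · subst hir; exact hrow_r
    · rw [rowWord_update_ne hir]; exact hd.1 i hi1 hi2
  · intro i hi1 hi2
    by_cases hir : i = r
    · -- pair (r, r+1)
      subst hir
      rw [rowWord_update_ne (show i + 1 ≠ i by omega), hsp']
      have hold := hd.2 i hi1 hi2
      rw [hsp] at hold
      obtain ⟨hsub, hhook, hbound⟩ := hold
      have hnext1 : ∀ x ∈ rowWord lam d (i+1), 1 ≤ x := by
        intro x hx
        unfold rowWord at hx
        rw [List.mem_map] at hx
        obtain ⟨j, hj, rfl⟩ := hx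
        rw [List.mem_range] at hj
        exact hpos _ _ ⟨by omega, by omega, by omega, by omega⟩
      refine ⟨?_, ?_, ?_⟩
      · exact List.sublist_append_right _ _
      · rw [← hsp']; exact hrow_r
      · have hUV1 : ∀ x ∈ rowWord lam d (i+1) ++ u, 1 ≤ x := by
          intro x hx
          rcases List.mem_append.mp hx with h | h
          · exact hnext1 x h
          · exact hu1 x h
        have hb' : ∀ t, t.Sublist ((rowWord lam d (i+1) ++ u) ++ a :: v) → IsHookWord t →
            t.length ≤ (u ++ b :: v).length := by
          intro t ht hh
          have := hbound t (by rwa [List.append_assoc] at ht) hh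
          simpa using this
        intro t ht hh
        rw [← List.append_assoc] at ht
        exact max_transfer hUV1 hv3 ha1 ha2 hb1 hb2 hb' t ht hh
    · by_cases hir1 : i + 1 = r
      · -- pair (r-1, r)
        have hieq : i = r - 1 := by omega
        rw [rowWord_update_ne hir, hir1, hsp']
        have hold := hd.2 i hi1 hi2
        rw [hir1, hsp] at hold
        obtain ⟨hsub, hhook, hbound⟩ := hold
        have habv : ∀ x ∈ rowWord lam d i, 3 ≤ x := by
          intro x hx
          unfold rowWord at hx
          rw [List.mem_map] at hx
          obtain ⟨j, hj, rfl⟩ := hx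
          rw [List.mem_range] at hj
          rw [hieq] at hj ⊢
          exact habove3 _ ⟨by omega, by omega, by omega, by omega⟩
        have hV3 : ∀ x ∈ v ++ rowWord lam d i, 3 ≤ x := by
          intro x hx
          rcases List.mem_append.mp hx with h | h
          · exact hv3 x h
          · exact habv x h
        have hb' : ∀ t, t.Sublist (u ++ a :: (v ++ rowWord lam d i)) → IsHookWord t →
            t.length ≤ (rowWord lam d i).length := by
          intro t ht hh
          refine hbound t ?_ hh
          rw [List.append_assoc]
          simpa using ht
        refine ⟨?_, hd.1 i hi1 (by omega), ?_⟩
        · exact List.sublist_append_right _ _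
        · intro t ht hh
          rw [List.append_assoc] at ht
          have ht' : t.Sublist (u ++ b :: (v ++ rowWord lam d i)) := by simpa using ht
          exact max_transfer hu1 hV3 ha1 ha2 hb1 hb2
            (fun t' ht'' hh'' => hb' t' ht'' hh'') t ht' hh
      · rw [rowWord_update_ne hir, rowWord_update_ne (by omega)]
        exact hd.2 i hi1 hi2
/-! ### Set-valued swap lemma -/

lemma swap_setvalued {lam : List ℕ} {T : ℕ × ℕ → Finset ℕ} {r c a b : ℕ}
    (hin : InSD lam r c) (haT : a ∈ T (r, c))
    (ha1 : 1 ≤ a) (ha2 : a ≤ 2) (hb1 : 1 ≤ b) (hb2 : b ≤ 2)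
    (hright : ∀ c', c < c' → InSD lam r c' → ∀ v ∈ T (r, c'), 3 ≤ v)
    (habove : ∀ c', InSD lam (r-1) c' → ∀ v ∈ T (r-1, c'), 3 ≤ v)
    (hT : IsSetDecompTab lam T) :
    IsSetDecompTab lam (Function.update T (r, c) (insert b ((T (r, c)).erase a))) := by
  constructor
  · intro i j hij
    by_cases h : (i, j) = (r, c)
    · rw [Prod.mk.injEq] at h
      obtain ⟨rfl, rfl⟩ := h
      rw [Function.update_self]
      exact ⟨⟨b, Finset.mem_insert_self _ _⟩, by
        intro h0
        rcases Finset.mem_insert.mp h0 with h0 | h0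
        · omega
        · exact ((hT.1 i j hij).2) (Finset.mem_of_mem_erase h0)⟩
    · rw [Function.update_of_ne h]
      exact hT.1 i j hij
  · intro d' hd'
    set d := Function.update d' (r, c) (if d' (r, c) = b then a else d' (r, c)) with hd_def
    have hdT : ∀ i j, InSD lam i j → d (i, j) ∈ T (i, j) := by
      intro i j hij
      by_cases h : (i, j) = (r, c)
      · rw [h]
        rw [hd_def, Function.update_self]
        split_ifs with hc
        · exact haT
        · have := hd' i j hij
          rw [h, Function.update_self] at this
          rcases Finset.mem_insert.mp this with h1 | h1
          · exact absurd (h ▸ h1) (by rw [h]; exact hc)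
          · exact Finset.mem_of_mem_erase h1
      · have := hd' i j hij
        rw [Function.update_of_ne h] at this
        rw [hd_def, Function.update_of_ne h]
        exact this
    have hd : IsDecompTab lam d := hT.2 d hdT
    by_cases hc : d' (r, c) = b
    · have he : d' = Function.update d (r, c) b := by
        funext z
        by_cases hz : z = (r, c)
        · rw [hz, Function.update_self, hc]
        · rw [Function.update_of_ne hz, hd_def, Function.update_of_ne hz]
      rw [he]
      refine decomp_update_mid ⟨hin.1, hin.2.1, hin.2.2.1, hin.2.2.2⟩ ha1 ha2 hb1 hb2 ?_ ?_ ?_ ?_ hd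
      · rw [hd_def, Function.update_self, if_pos hc]
      · intro i j hij
        have h1 := hdT i j hij
        have h2 := (hT.1 i j hij).2
        have : d (i, j) ≠ 0 := fun h => h2 (h ▸ h1)
        omega
      · intro c' hcc hin'
        exact hright c' hcc hin' _ (hdT r c' hin')
      · intro c' hin'
        exact habove c' hin' _ (hdT (r-1) c' hin')
    · have he : d = d' := by
        funext z
        by_cases hz : z = (r, c)
        · rw [hz, hd_def, Function.update_self, if_neg (by rw [← hz] at hc ⊢; exact hc)]
        · rw [hd_def, Function.update_of_ne hz]
      rwa [he] at hd

/-! ### Reading-order structure of boxes -/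

def boxBefore (p q : ℕ × ℕ) : Prop := p.1 < q.1 ∨ (p.1 = q.1 ∧ q.2 < p.2)

lemma boxBefore_irrefl (p : ℕ × ℕ) : ¬ boxBefore p p := by
  rintro (h | ⟨_, h⟩) <;> omega

lemma boxBefore_asymm {p q : ℕ × ℕ} (h : boxBefore p q) : ¬ boxBefore q p := by
  rcases h with h | ⟨h1, h2⟩ <;> rintro (h' | ⟨h1', h2'⟩) <;> omega

lemma pairwise_flatMap {α β : Type*} {R : β → β → Prop} {L : List α} {F : α → List β}
    (h1 : ∀ a ∈ L, (F a).Pairwise R)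
    (h2 : L.Pairwise fun a a' => ∀ x ∈ F a, ∀ y ∈ F a', R x y) :
    (L.flatMap F).Pairwise R := by
  induction L with
  | nil => simp
  | cons a L ih =>
    rw [List.flatMap_cons, List.pairwise_append]
    refine ⟨h1 a (by simp), ih (fun x hx => h1 x (by simp [hx])) (List.pairwise_cons.mp h2).2, ?_⟩
    intro x hx y hy
    rw [List.mem_flatMap] at hy
    obtain ⟨a', ha', hy⟩ := hy
    exact (List.pairwise_cons.mp h2).1 a' ha' x hx y hy

lemma revrowBoxes_pairwise (lam : List ℕ) : (revrowBoxes lam).Pairwise boxBefore := by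
  unfold revrowBoxes
  apply pairwise_flatMap
  · intro r _
    rw [List.pairwise_map, List.pairwise_reverse]
    exact (List.pairwise_lt_range).imp (fun h => Or.inr ⟨rfl, by simpa using h⟩)
  · refine (List.pairwise_lt_range).imp ?_
    intro a b hab x hx y hy
    rw [List.mem_map] at hx hy
    obtain ⟨j, _, rfl⟩ := hx
    obtain ⟨j', _, rfl⟩ := hy
    exact Or.inl (by simpa using hab)

lemma revrowBoxes_nodup (lam : List ℕ) : (revrowBoxes lam).Nodup :=
  (revrowBoxes_pairwise lam).imp (fun h => by rintro rfl; exact boxBefore_irrefl _ h)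

lemma mem_revrowBoxes {lam : List ℕ} {p : ℕ × ℕ} :
    p ∈ revrowBoxes lam ↔ InSD lam p.1 p.2 := by
  unfold revrowBoxes InSD
  simp only [List.mem_flatMap, List.mem_map, List.mem_reverse, List.mem_range]
  constructor
  · rintro ⟨r, hr, j, hj, rfl⟩
    have e : r + 1 - 1 = r := by omega
    refine ⟨by omega, by omega, by omega, ?_⟩
    show r + 1 + j < r + 1 + lam.getD (r + 1 - 1) 0
    rw [e]
    omega
  · rintro ⟨h1, h2, h3, h4⟩
    refine ⟨p.1 - 1, by omega, p.2 - p.1, by omega, ?_⟩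
    cases p with
    | mk x y =>
      simp only [Prod.mk.injEq]
      constructor <;> simp at h1 h2 h3 h4 ⊢ <;> omega

lemma revrowBoxes_decomp {lam : List ℕ} {xy : ℕ × ℕ} (h : xy ∈ revrowBoxes lam) :
    ∃ P Q, revrowBoxes lam = P ++ xy :: Q ∧ xy ∉ P ∧ xy ∉ Q ∧
      (∀ b ∈ revrowBoxes lam, boxBefore b xy → b ∈ P) ∧ (∀ b ∈ P, boxBefore b xy) := by
  obtain ⟨P, Q, hPQ⟩ := List.append_of_mem h
  have hnd := revrowBoxes_nodup lam
  have hpw := revrowBoxes_pairwise lam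
  rw [hPQ] at hnd hpw
  rw [List.pairwise_append] at hpw
  obtain ⟨hpwP, hpwxQ, hcross⟩ := hpw
  rw [List.pairwise_cons] at hpwxQ
  have hndP : xy ∉ P := by
    intro hxy
    have := (List.nodup_append'.mp hnd).2.2
    exact this hxy (List.mem_cons_self)
  have hndQ : xy ∉ Q := by
    have := List.nodup_cons.mp (List.nodup_append'.mp hnd).2.1
    exact this.1
  refine ⟨P, Q, hPQ, hndP, hndQ, ?_, fun b hb => hcross b hb xy List.mem_cons_self⟩
  intro b hb hbb
  rw [hPQ] at hb
  rcases List.mem_append.mp hb with h' | h'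
  · exact h'
  · rcases List.mem_cons.mp h' with rfl | h'
    · exact absurd hbb (boxBefore_irrefl _)
    · exact absurd hbb (boxBefore_asymm (hpwxQ.1 b h'))

/-! ### The swap relation -/

def SwapRel (lam : List ℕ) (xy : ℕ × ℕ) (T T' : ℕ × ℕ → Finset ℕ) : Prop :=
  xy ∈ revrowBoxes lam ∧
  (∀ b ∈ revrowBoxes lam, boxBefore b xy → 1 ∉ T b ∧ 2 ∉ T b) ∧
  (∀ b ∈ revrowBoxes lam, 0 ∉ T b) ∧
  2 ∈ T xy ∧ 1 ∉ T xy ∧ (∀ v ∈ T xy, v ≠ 2 → 3 ≤ v) ∧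
  T' = Function.update T xy (insert 1 ((T xy).erase 2))

lemma swapback1 {X : Finset ℕ} (h2 : 2 ∈ X) (h1 : 1 ∉ X) :
    insert 2 ((insert 1 (X.erase 2)).erase 1) = X := by
  ext v
  simp only [Finset.mem_insert, Finset.mem_erase]
  constructor
  · rintro (rfl | ⟨hv1, (rfl | ⟨hv2, hvX⟩)⟩)
    · exact h2
    · exact absurd rfl hv1
    · exact hvX
  · intro hv
    by_cases h : v = 2
    · left; exact h
    · exact Or.inr ⟨fun h1' => h1 (h1' ▸ hv), Or.inr ⟨h, hv⟩⟩

lemma swapback2 {X : Finset ℕ} (h1 : 1 ∈ X) (h2 : 2 ∉ X) :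
    insert 1 ((insert 2 (X.erase 1)).erase 2) = X := by
  ext v
  simp only [Finset.mem_insert, Finset.mem_erase]
  constructor
  · rintro (rfl | ⟨hv2, (rfl | ⟨hv1, hvX⟩)⟩)
    · exact h1
    · exact absurd rfl hv2
    · exact hvX
  · intro hv
    by_cases h : v = 1
    · left; exact h
    · exact Or.inr ⟨fun h2' => h2 (h2' ▸ hv), Or.inr ⟨h, hv⟩⟩

lemma SwapRel.mirror {lam : List ℕ} {xy : ℕ × ℕ} {T T' : ℕ × ℕ → Finset ℕ}
    (h : SwapRel lam xy T T') :
    (∀ b ∈ revrowBoxes lam, boxBefore b xy → 1 ∉ T' b ∧ 2 ∉ T' b) ∧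
    (∀ b ∈ revrowBoxes lam, 0 ∉ T' b) ∧
    1 ∈ T' xy ∧ 2 ∉ T' xy ∧ (∀ v ∈ T' xy, v ≠ 1 → 3 ≤ v) ∧
    T = Function.update T' xy (insert 2 ((T' xy).erase 1)) := by
  obtain ⟨hmem, hbef, h0, h2, h1, h3, rfl⟩ := h
  have hXy : Function.update T xy (insert 1 ((T xy).erase 2)) xy
      = insert 1 ((T xy).erase 2) := Function.update_self _ _ _
  refine ⟨?_, ?_, ?_, ?_, ?_, ?_⟩
  · intro b hb hbb
    rw [Function.update_of_ne (by rintro rfl; exact boxBefore_irrefl _ hbb)]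
    exact hbef b hb hbb
  · intro b hb
    by_cases hbxy : b = xy
    · subst hbxy
      rw [hXy]
      intro hh
      rcases Finset.mem_insert.mp hh with hh | hh
      · omega
      · exact h0 b hb (Finset.mem_of_mem_erase hh)
    · rw [Function.update_of_ne hbxy]; exact h0 b hb
  · rw [hXy]; exact Finset.mem_insert_self _ _
  · rw [hXy]
    intro hh
    rcases Finset.mem_insert.mp hh with hh | hh
    · omega
    · exact (Finset.mem_erase.mp hh).1 rfl
  · rw [hXy]
    intro v hv hv1
    rcases Finset.mem_insert.mp hv with rfl | hv
    · omega
    · exact h3 v (Finset.mem_of_mem_erase hv) (Finset.mem_erase.mp hv).1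
  · funext z
    by_cases hz : z = xy
    · subst hz
      rw [Function.update_self, hXy, swapback1 h2 h1]
    · rw [Function.update_of_ne hz, Function.update_of_ne hz]

lemma SwapRel.isSetDecompTab_iff {lam : List ℕ} {xy : ℕ × ℕ} {T T' : ℕ × ℕ → Finset ℕ}
    (h : SwapRel lam xy T T') : IsSetDecompTab lam T ↔ IsSetDecompTab lam T' := by
  obtain ⟨hmem, hbef, h0, h2, h1, h3, hT'⟩ := h
  have hin : InSD lam xy.1 xy.2 := mem_revrowBoxes.mp hmem
  have hxy_eta : xy = (xy.1, xy.2) := rfl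
  constructor
  · intro hT
    rw [hT', hxy_eta]
    refine swap_setvalued (a := 2) (b := 1) hin (by rw [← hxy_eta]; exact h2)
      (by omega) (by omega) (by omega) (by omega) ?_ ?_ hT
    · intro c' hcc hin' v hv
      have hb : (xy.1, c') ∈ revrowBoxes lam := mem_revrowBoxes.mpr hin'
      have := hbef _ hb (Or.inr ⟨rfl, hcc⟩)
      have hne0 := h0 _ hb
      have : v ≠ 1 ∧ v ≠ 2 ∧ v ≠ 0 :=
        ⟨fun e => this.1 (e ▸ hv), fun e => this.2 (e ▸ hv), fun e => hne0 (e ▸ hv)⟩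
      omega
    · intro c' hin' v hv
      have hb : (xy.1 - 1, c') ∈ revrowBoxes lam := mem_revrowBoxes.mpr hin'
      have hlt : xy.1 - 1 < xy.1 := by have := hin.1; omega
      have := hbef _ hb (Or.inl hlt)
      have hne0 := h0 _ hb
      have : v ≠ 1 ∧ v ≠ 2 ∧ v ≠ 0 :=
        ⟨fun e => this.1 (e ▸ hv), fun e => this.2 (e ▸ hv), fun e => hne0 (e ▸ hv)⟩
      omega
  · intro hT'tab
    have hm := SwapRel.mirror ⟨hmem, hbef, h0, h2, h1, h3, hT'⟩
    obtain ⟨hbef', h0', h1', h2', h3', hTeq⟩ := hm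
    rw [hTeq, hxy_eta]
    refine swap_setvalued (a := 1) (b := 2) hin (by rw [← hxy_eta]; exact h1')
      (by omega) (by omega) (by omega) (by omega) ?_ ?_ hT'tab
    · intro c' hcc hin' v hv
      have hb : (xy.1, c') ∈ revrowBoxes lam := mem_revrowBoxes.mpr hin'
      have := hbef' _ hb (Or.inr ⟨rfl, hcc⟩)
      have hne0 := h0' _ hb
      have : v ≠ 1 ∧ v ≠ 2 ∧ v ≠ 0 :=
        ⟨fun e => this.1 (e ▸ hv), fun e => this.2 (e ▸ hv), fun e => hne0 (e ▸ hv)⟩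
      omega
    · intro c' hin' v hv
      have hb : (xy.1 - 1, c') ∈ revrowBoxes lam := mem_revrowBoxes.mpr hin'
      have hlt : xy.1 - 1 < xy.1 := by have := hin.1; omega
      have := hbef' _ hb (Or.inl hlt)
      have hne0 := h0' _ hb
      have : v ≠ 1 ∧ v ≠ 2 ∧ v ≠ 0 :=
        ⟨fun e => this.1 (e ▸ hv), fun e => this.2 (e ▸ hv), fun e => hne0 (e ▸ hv)⟩
      omega
/-! ### Entries machinery -/

lemma gget_lt {α : Type*} {u v : List α} {x d : α} {j : ℕ} (h : j < u.length) :
    (u ++ x :: v).getD j d = u.getD j d := List.getD_append _ _ _ _ h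

lemma gget_eq {α : Type*} {u v : List α} {x d : α} {j : ℕ} (h : j = u.length) :
    (u ++ x :: v).getD j d = x := by
  subst h
  rw [List.getD_append_right _ _ _ _ le_rfl, Nat.sub_self]; rfl

lemma gget_gt {α : Type*} {u v : List α} {x d : α} {j : ℕ} (h : u.length < j) :
    (u ++ x :: v).getD j d = v.getD (j - u.length - 1) d := by
  rw [List.getD_append_right _ _ _ _ (le_of_lt h)]
  rcases Nat.exists_eq_add_of_lt h with ⟨m, rfl⟩
  have e : u.length + m + 1 - u.length = m + 1 := by omega
  rw [e, List.getD_cons_succ]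
  congr 1

lemma flatMap_congr {α β : Type*} {L : List α} {f g : α → List β}
    (h : ∀ a ∈ L, f a = g a) : L.flatMap f = L.flatMap g := by
  induction L with
  | nil => rfl
  | cons a L ih =>
    rw [List.flatMap_cons, List.flatMap_cons, h a (by simp), ih (fun x hx => h x (by simp [hx]))]

def entryBlock (T : ℕ × ℕ → Finset ℕ) (b : ℕ × ℕ) : List ((ℕ × ℕ) × ℕ) :=
  (((T b).sort (· ≤ ·)).reverse).map fun v => (b, v)

lemma revrowEntries_eq (lam : List ℕ) (T : ℕ × ℕ → Finset ℕ) :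
    revrowEntries lam T = (revrowBoxes lam).flatMap (entryBlock T) := rfl

lemma mem_entryBlock {T : ℕ × ℕ → Finset ℕ} {b : ℕ × ℕ} {e : (ℕ × ℕ) × ℕ} :
    e ∈ entryBlock T b ↔ e.1 = b ∧ e.2 ∈ T b := by
  unfold entryBlock
  rw [List.mem_map]
  constructor
  · rintro ⟨v, hv, rfl⟩
    rw [List.mem_reverse, Finset.mem_sort] at hv
    exact ⟨rfl, hv⟩
  · rintro ⟨h1, h2⟩
    exact ⟨e.2, by rw [List.mem_reverse, Finset.mem_sort]; exact h2, by
      rw [← h1]⟩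

lemma block_split_gen {X : Finset ℕ} {c : ℕ} (hc : c ∈ X)
    (hmin : ∀ v ∈ X, v ≠ c → c < v) (b : ℕ × ℕ) :
    (X.sort (· ≤ ·)).reverse.map (fun v => (b, v)) =
      ((X.erase c).sort (· ≤ ·)).reverse.map (fun v => (b, v)) ++ [(b, c)] := by
  have h1 : ∀ v ∈ X.erase c, c < v := fun v hv =>
    hmin v (Finset.mem_of_mem_erase hv) (Finset.ne_of_mem_erase hv)
  have h2 : (X.sort (· ≤ ·)) = c :: (X.erase c).sort (· ≤ ·) := by
    conv_lhs => rw [← Finset.insert_erase hc]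
    exact Finset.sort_insert _ (fun v hv => le_of_lt (h1 v hv)) (Finset.notMem_erase c X)
  rw [h2, List.reverse_cons, List.map_append]
  rfl

lemma SwapRel.entries {lam : List ℕ} {xy : ℕ × ℕ} {T T' : ℕ × ℕ → Finset ℕ}
    (h : SwapRel lam xy T T') :
    ∃ E1 E2 : List ((ℕ × ℕ) × ℕ),
      revrowEntries lam T = E1 ++ ((xy, 2) :: E2) ∧
      revrowEntries lam T' = E1 ++ ((xy, 1) :: E2) ∧
      (∀ e ∈ E1, ¬ e.2 ≤ 2) := by
  obtain ⟨hmem, hbef, h0, h2, h1, h3, hT'⟩ := h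
  obtain ⟨P, Q, hPQ, hxP, hxQ, _, hPbef⟩ := revrowBoxes_decomp hmem
  have hmin2 : ∀ v ∈ T xy, v ≠ 2 → 2 < v := fun v hv hv2 => by have := h3 v hv hv2; omega
  have hblockT : entryBlock T xy =
      (((T xy).erase 2).sort (· ≤ ·)).reverse.map (fun v => (xy, v)) ++ [(xy, 2)] :=
    block_split_gen h2 hmin2 xy
  have hT'xy : T' xy = insert 1 ((T xy).erase 2) := by rw [hT', Function.update_self]
  have h1no : (1 : ℕ) ∉ (T xy).erase 2 := fun hh => h1 (Finset.mem_of_mem_erase hh)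
  have hblockT' : entryBlock T' xy =
      (((T xy).erase 2).sort (· ≤ ·)).reverse.map (fun v => (xy, v)) ++ [(xy, 1)] := by
    have hc1 : (1 : ℕ) ∈ T' xy := by rw [hT'xy]; exact Finset.mem_insert_self _ _
    have hmin1 : ∀ v ∈ T' xy, v ≠ 1 → 1 < v := by
      intro v hv hv1
      rw [hT'xy] at hv
      rcases Finset.mem_insert.mp hv with rfl | hv
      · omega
      · have := h3 v (Finset.mem_of_mem_erase hv) (Finset.mem_erase.mp hv).1; omega
    have := block_split_gen hc1 hmin1 xy
    rw [show (T' xy).erase 1 = (T xy).erase 2 by rw [hT'xy]; exact Finset.erase_insert h1no]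
      at this
    exact this
  refine ⟨P.flatMap (entryBlock T) ++
      (((T xy).erase 2).sort (· ≤ ·)).reverse.map (fun v => (xy, v)),
    Q.flatMap (entryBlock T), ?_, ?_, ?_⟩
  · rw [revrowEntries_eq, hPQ, List.flatMap_append, List.flatMap_cons, hblockT]
    simp [List.append_assoc]
  · have hblk : ∀ b, b ≠ xy → entryBlock T' b = entryBlock T b := by
      intro b hb
      unfold entryBlock
      rw [hT', Function.update_of_ne hb]
    have hPsame : P.flatMap (entryBlock T') = P.flatMap (entryBlock T) :=
      flatMap_congr (fun b hb => hblk b (fun he => hxP (he ▸ hb)))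
    have hQsame : Q.flatMap (entryBlock T') = Q.flatMap (entryBlock T) :=
      flatMap_congr (fun b hb => hblk b (fun he => hxQ (he ▸ hb)))
    rw [revrowEntries_eq, hPQ, List.flatMap_append, List.flatMap_cons, hblockT', hPsame,
      hQsame]
    simp [List.append_assoc]
  · intro e he
    rcases List.mem_append.mp he with he | he
    · rw [List.mem_flatMap] at he
      obtain ⟨b, hb, he⟩ := he
      obtain ⟨he1, he2⟩ := mem_entryBlock.mp he
      have hbmem : b ∈ revrowBoxes lam := by rw [hPQ]; exact List.mem_append_left _ hb
      have hb12 := hbef b hbmem (hPbef b hb)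
      have hb0 := h0 b hbmem
      intro hle
      have hc : e.2 = 0 ∨ e.2 = 1 ∨ e.2 = 2 := by omega
      rcases hc with h | h | h
      · exact hb0 (h ▸ he2)
      · exact hb12.1 (h ▸ he2)
      · exact hb12.2 (h ▸ he2)
    · rw [List.mem_map] at he
      obtain ⟨v, hv, rfl⟩ := he
      rw [List.mem_reverse, Finset.mem_sort] at hv
      have := h3 v (Finset.mem_of_mem_erase hv) (Finset.mem_erase.mp hv).1
      omega
/-! ### Evaluation lemmas for the bar operators -/

lemma eBar_eval_pos {lam : List ℕ} {T : ℕ × ℕ → Finset ℕ}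
    (hEw : ∃ p, p < (revrowWord lam T).length ∧ (revrowWord lam T).getD p 0 = 2 ∧
      ∀ q < p, (revrowWord lam T).getD q 0 ≠ 1)
    (h1x : 1 ∉ T ((revrowEntries lam T).getD (Nat.find hEw) ((0, 0), 0)).1) :
    eBarCrystal lam T = some (Function.update T
      ((revrowEntries lam T).getD (Nat.find hEw) ((0, 0), 0)).1
      (insert 1 ((T ((revrowEntries lam T).getD (Nat.find hEw) ((0, 0), 0)).1).erase 2))) := by
  simp only [eBarCrystal]
  rw [dif_pos hEw]
  simp only [if_neg h1x]

lemma eBar_eval_guard {lam : List ℕ} {T : ℕ × ℕ → Finset ℕ}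
    (hEw : ∃ p, p < (revrowWord lam T).length ∧ (revrowWord lam T).getD p 0 = 2 ∧
      ∀ q < p, (revrowWord lam T).getD q 0 ≠ 1)
    (h1x : 1 ∈ T ((revrowEntries lam T).getD (Nat.find hEw) ((0, 0), 0)).1) :
    eBarCrystal lam T = none := by
  simp only [eBarCrystal]
  rw [dif_pos hEw]
  simp only [if_pos h1x]

lemma eBar_eval_neg {lam : List ℕ} {T : ℕ × ℕ → Finset ℕ}
    (hEw : ¬ ∃ p, p < (revrowWord lam T).length ∧ (revrowWord lam T).getD p 0 = 2 ∧
      ∀ q < p, (revrowWord lam T).getD q 0 ≠ 1) :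
    eBarCrystal lam T = none := by
  simp only [eBarCrystal]
  rw [dif_neg hEw]

lemma fBar_eval_pos {lam : List ℕ} {T : ℕ × ℕ → Finset ℕ}
    (hFw : ∃ p, p < (revrowWord lam T).length ∧ (revrowWord lam T).getD p 0 = 1 ∧
      ∀ q < p, (revrowWord lam T).getD q 0 ≠ 2) :
    fBarCrystal lam T = some (Function.update T
      ((revrowEntries lam T).getD (Nat.find hFw) ((0, 0), 0)).1
      (insert 2 ((T ((revrowEntries lam T).getD (Nat.find hFw) ((0, 0), 0)).1).erase 1))) := by
  simp only [fBarCrystal]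
  rw [dif_pos hFw]

lemma fBar_eval_neg {lam : List ℕ} {T : ℕ × ℕ → Finset ℕ}
    (hFw : ¬ ∃ p, p < (revrowWord lam T).length ∧ (revrowWord lam T).getD p 0 = 1 ∧
      ∀ q < p, (revrowWord lam T).getD q 0 ≠ 2) :
    fBarCrystal lam T = none := by
  simp only [fBarCrystal]
  rw [dif_neg hFw]

/-! ### Word facts from SwapRel -/

lemma revrowWord_eq (lam : List ℕ) (T : ℕ × ℕ → Finset ℕ) :
    revrowWord lam T = (revrowEntries lam T).map Prod.snd := rfl

lemma SwapRel.words {lam : List ℕ} {xy : ℕ × ℕ} {T T' : ℕ × ℕ → Finset ℕ}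
    (h : SwapRel lam xy T T') :
    ∃ E1 E2 : List ((ℕ × ℕ) × ℕ),
      revrowEntries lam T = E1 ++ ((xy, 2) :: E2) ∧
      revrowEntries lam T' = E1 ++ ((xy, 1) :: E2) ∧
      (∀ e ∈ E1, ¬ e.2 ≤ 2) ∧
      revrowWord lam T = (E1.map Prod.snd) ++ 2 :: (E2.map Prod.snd) ∧
      revrowWord lam T' = (E1.map Prod.snd) ++ 1 :: (E2.map Prod.snd) := by
  obtain ⟨E1, E2, hE, hE', hsm⟩ := h.entries
  exact ⟨E1, E2, hE, hE', hsm, by rw [revrowWord_eq, hE]; simp, by rw [revrowWord_eq, hE']; simp⟩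

lemma ebar_some_of_swapRel {lam : List ℕ} {xy : ℕ × ℕ} {T T' : ℕ × ℕ → Finset ℕ}
    (h : SwapRel lam xy T T') : eBarCrystal lam T = some T' := by
  obtain ⟨E1, E2, hE, hE', hsm, hw, hw'⟩ := h.words
  have hlen1 : (E1.map Prod.snd).length = E1.length := List.length_map _
  have hwlen : (revrowWord lam T).length = E1.length + 1 + (E2.map Prod.snd).length := by
    rw [hw, wlen, hlen1]
  have hP0 : E1.length < (revrowWord lam T).length ∧
      (revrowWord lam T).getD E1.length 0 = 2 ∧
      ∀ q < E1.length, (revrowWord lam T).getD q 0 ≠ 1 := by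
    refine ⟨by omega, by rw [hw]; exact wget_eq (by omega), ?_⟩
    intro q hq
    rw [hw, wget_lt (by omega)]
    have hmem : (E1.map Prod.snd).getD q 0 ∈ E1.map Prod.snd :=
      getD_mem_of_lt (by omega)
    rw [List.mem_map] at hmem
    obtain ⟨e, he, hee⟩ := hmem
    have := hsm e he
    omega
  have hEw : ∃ p, p < (revrowWord lam T).length ∧ (revrowWord lam T).getD p 0 = 2 ∧
      ∀ q < p, (revrowWord lam T).getD q 0 ≠ 1 := ⟨E1.length, hP0⟩
  have hfind : Nat.find hEw = E1.length := by
    rw [Nat.find_eq_iff]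
    refine ⟨hP0, ?_⟩
    intro q hq hcon
    have : (revrowWord lam T).getD q 0 = 2 := hcon.2.1
    rw [hw, wget_lt (by omega)] at this
    have hmem : (E1.map Prod.snd).getD q 0 ∈ E1.map Prod.snd := getD_mem_of_lt (by omega)
    rw [List.mem_map] at hmem
    obtain ⟨e, he, hee⟩ := hmem
    have := hsm e he
    omega
  have hgd : (revrowEntries lam T).getD (Nat.find hEw) ((0, 0), 0) = (xy, 2) := by
    rw [hfind, hE]
    exact gget_eq rfl
  have h1x : 1 ∉ T ((revrowEntries lam T).getD (Nat.find hEw) ((0, 0), 0)).1 := by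
    rw [hgd]
    exact h.2.2.2.2.1
  rw [eBar_eval_pos hEw h1x, hgd]
  have := h.2.2.2.2.2.2
  rw [← this]

lemma fbar_some_of_swapRel {lam : List ℕ} {xy : ℕ × ℕ} {T T' : ℕ × ℕ → Finset ℕ}
    (h : SwapRel lam xy T T') : fBarCrystal lam T' = some T := by
  obtain ⟨E1, E2, hE, hE', hsm, hw, hw'⟩ := h.words
  obtain ⟨hbef', h0', h1', h2', h3', hTeq⟩ := h.mirror
  have hlen1 : (E1.map Prod.snd).length = E1.length := List.length_map _
  have hwlen : (revrowWord lam T').length = E1.length + 1 + (E2.map Prod.snd).length := by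
    rw [hw', wlen, hlen1]
  have hP0 : E1.length < (revrowWord lam T').length ∧
      (revrowWord lam T').getD E1.length 0 = 1 ∧
      ∀ q < E1.length, (revrowWord lam T').getD q 0 ≠ 2 := by
    refine ⟨by omega, by rw [hw']; exact wget_eq (by omega), ?_⟩
    intro q hq
    rw [hw', wget_lt (by omega)]
    have hmem : (E1.map Prod.snd).getD q 0 ∈ E1.map Prod.snd := getD_mem_of_lt (by omega)
    rw [List.mem_map] at hmem
    obtain ⟨e, he, hee⟩ := hmem
    have := hsm e he
    omega
  have hFw : ∃ p, p < (revrowWord lam T').length ∧ (revrowWord lam T').getD p 0 = 1 ∧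
      ∀ q < p, (revrowWord lam T').getD q 0 ≠ 2 := ⟨E1.length, hP0⟩
  have hfind : Nat.find hFw = E1.length := by
    rw [Nat.find_eq_iff]
    refine ⟨hP0, ?_⟩
    intro q hq hcon
    have : (revrowWord lam T').getD q 0 = 1 := hcon.2.1
    rw [hw', wget_lt (by omega)] at this
    have hmem : (E1.map Prod.snd).getD q 0 ∈ E1.map Prod.snd := getD_mem_of_lt (by omega)
    rw [List.mem_map] at hmem
    obtain ⟨e, he, hee⟩ := hmem
    have := hsm e he
    omega
  have hgd : (revrowEntries lam T').getD (Nat.find hFw) ((0, 0), 0) = (xy, 1) := by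
    rw [hfind, hE']
    exact gget_eq rfl
  rw [fBar_eval_pos hFw, hgd]
  rw [← hTeq]
/-! ### Recovering the swap relation from the operators -/

lemma flatMap_getD_split {α β : Type*} (d : β) :
    ∀ (L : List α) (F : α → List β) (p : ℕ), p < (L.flatMap F).length →
    ∃ P x Q j, L = P ++ x :: Q ∧ j < (F x).length ∧ p = (P.flatMap F).length + j ∧
      (L.flatMap F).getD p d = (F x).getD j d := by
  intro L
  induction L with
  | nil => simp
  | cons a L ih =>
    intro F p hp
    by_cases h : p < (F a).length
    · refine ⟨[], a, L, p, rfl, h, by simp, ?_⟩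
      rw [List.flatMap_cons]
      exact List.getD_append _ _ _ _ h
    · have hp' : p - (F a).length < (L.flatMap F).length := by
        rw [List.flatMap_cons, List.length_append] at hp; omega
      obtain ⟨P, x, Q, j, hL, hj, hpj, hgd⟩ := ih F (p - (F a).length) hp'
      refine ⟨a :: P, x, Q, j, by rw [hL]; rfl, hj, ?_, ?_⟩
      · rw [List.flatMap_cons, List.length_append]; omega
      · rw [List.flatMap_cons, List.getD_append_right _ _ _ _ (by omega)]
        exact hgd

lemma mem_desc_idx {l : List ℕ} (hl : l.Pairwise (fun a b => b < a)) {x j : ℕ}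
    (hj : j < l.length) (hx : x ∈ l) (hgt : l.getD j 0 < x) :
    ∃ j', j' < j ∧ l.getD j' 0 = x := by
  obtain ⟨j'', hj'', hxe⟩ := List.mem_iff_getElem.mp hx
  have hpw := List.pairwise_iff_getElem.mp hl
  rcases Nat.lt_trichotomy j'' j with h | h | h
  · exact ⟨j'', h, by rw [List.getD_eq_getElem _ _ hj'']; exact hxe⟩
  · subst h
    rw [List.getD_eq_getElem _ _ hj''] at hgt
    omega
  · have := hpw j j'' hj hj'' h
    rw [List.getD_eq_getElem _ _ hj] at hgt
    omega

lemma desc_pairwise (S : Finset ℕ) :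
    ((S.sort (· ≤ ·)).reverse).Pairwise (fun a b => b < a) := by
  rw [List.pairwise_reverse]
  exact (Finset.sortedLT_sort S).pairwise

lemma word_getD_entries {lam : List ℕ} {T : ℕ × ℕ → Finset ℕ} {p : ℕ}
    (hp : p < (revrowWord lam T).length) :
    (revrowWord lam T).getD p 0 = ((revrowEntries lam T).getD p ((0, 0), 0)).2 := by
  have hp' : p < (revrowEntries lam T).length := by
    have : (revrowWord lam T).length = (revrowEntries lam T).length := List.length_map _
    omega
  rw [revrowWord_eq, List.getD_eq_getElem _ _ (by rwa [List.length_map]),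
    List.getD_eq_getElem _ _ hp', List.getElem_map]

lemma entryBlock_getD {T : ℕ × ℕ → Finset ℕ} {x : ℕ × ℕ} {j : ℕ}
    (hj : j < (entryBlock T x).length) :
    (entryBlock T x).getD j ((0, 0), 0) =
      (x, (((T x).sort (· ≤ ·)).reverse).getD j 0) := by
  unfold entryBlock at hj ⊢
  rw [List.getD_eq_getElem _ _ hj, List.getElem_map,
    List.getD_eq_getElem _ _ (by rw [List.length_map] at hj; exact hj)]

lemma mem_P_of_before {lam : List ℕ} {P Q : List (ℕ × ℕ)} {x : ℕ × ℕ}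
    (hPQ : revrowBoxes lam = P ++ x :: Q) :
    (∀ b ∈ revrowBoxes lam, boxBefore b x → b ∈ P) ∧ (∀ b ∈ P, boxBefore b x) ∧
      x ∉ P ∧ x ∉ Q := by
  have hnd := revrowBoxes_nodup lam
  have hpw := revrowBoxes_pairwise lam
  rw [hPQ] at hnd hpw
  rw [List.pairwise_append] at hpw
  obtain ⟨hpwP, hpwxQ, hcross⟩ := hpw
  rw [List.pairwise_cons] at hpwxQ
  have hndP : x ∉ P := by
    intro hxy
    exact (List.nodup_append'.mp hnd).2.2 hxy (List.mem_cons_self)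
  have hndQ : x ∉ Q := (List.nodup_cons.mp (List.nodup_append'.mp hnd).2.1).1
  refine ⟨?_, fun b hb => hcross b hb x List.mem_cons_self, hndP, hndQ⟩
  intro b hb hbb
  rw [hPQ] at hb
  rcases List.mem_append.mp hb with h' | h'
  · exact h'
  · rcases List.mem_cons.mp h' with rfl | h'
    · exact absurd hbb (boxBefore_irrefl _)
    · exact absurd hbb (boxBefore_asymm (hpwxQ.1 b h'))

/-- Key index fact: a small letter in a box of `P` shows up in the word before `p`. -/
lemma before_box_small {lam : List ℕ} {T : ℕ × ℕ → Finset ℕ} {P Q : List (ℕ × ℕ)}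
    {x b : ℕ × ℕ} {v p j : ℕ}
    (hPQ : revrowBoxes lam = P ++ x :: Q)
    (hpj : p = (P.flatMap (entryBlock T)).length + j)
    (hb : b ∈ P) (hv : v ∈ T b) :
    ∃ q < p, (revrowWord lam T).getD q 0 = v ∧ q < (revrowWord lam T).length := by
  have hmem : ((b, v) : (ℕ × ℕ) × ℕ) ∈ P.flatMap (entryBlock T) :=
    List.mem_flatMap.mpr ⟨b, hb, mem_entryBlock.mpr ⟨rfl, hv⟩⟩
  obtain ⟨q, hq, hqe⟩ := List.mem_iff_getElem.mp hmem
  have hentries : revrowEntries lam T =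
      P.flatMap (entryBlock T) ++ (entryBlock T x ++ Q.flatMap (entryBlock T)) := by
    rw [revrowEntries_eq, hPQ, List.flatMap_append, List.flatMap_cons]
  have hqlt : q < (revrowEntries lam T).length := by
    rw [hentries, List.length_append]; omega
  have hwlen : (revrowWord lam T).length = (revrowEntries lam T).length := List.length_map _
  have hgdq : (revrowEntries lam T).getD q ((0, 0), 0) = (b, v) := by
    rw [hentries, List.getD_append _ _ _ _ hq, List.getD_eq_getElem _ _ hq, hqe]
  refine ⟨q, by omega, ?_, by omega⟩
  rw [word_getD_entries (by omega), hgdq]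

lemma ebar_some_spec {lam : List ℕ} {T U : ℕ × ℕ → Finset ℕ}
    (h0 : ∀ b ∈ revrowBoxes lam, 0 ∉ T b)
    (h : eBarCrystal lam T = some U) : ∃ xy, SwapRel lam xy T U := by
  by_cases hEw : ∃ p, p < (revrowWord lam T).length ∧ (revrowWord lam T).getD p 0 = 2 ∧
      ∀ q < p, (revrowWord lam T).getD q 0 ≠ 1
  swap
  · rw [eBar_eval_neg hEw] at h; exact absurd h (by simp)
  obtain ⟨hplen, hp2, hno1⟩ := Nat.find_spec hEw
  have hno2 : ∀ q < Nat.find hEw, (revrowWord lam T).getD q 0 ≠ 2 := by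
    intro q hq hq2
    exact Nat.find_min hEw hq ⟨by omega, hq2, fun q' hq' => hno1 q' (by omega)⟩
  have hplen' : Nat.find hEw < ((revrowBoxes lam).flatMap (entryBlock T)).length := by
    rw [← revrowEntries_eq]
    have : (revrowWord lam T).length = (revrowEntries lam T).length := List.length_map _
    omega
  obtain ⟨P, x, Q, j, hPQ, hj, hpj, hgd⟩ :=
    flatMap_getD_split ((0, 0), 0) (revrowBoxes lam) (entryBlock T) (Nat.find hEw) hplen'
  rw [← revrowEntries_eq] at hgd
  have hxmem : x ∈ revrowBoxes lam := by rw [hPQ]; exact List.mem_append_right _ (by simp)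
  have hentry : (revrowEntries lam T).getD (Nat.find hEw) ((0, 0), 0) =
      (x, (((T x).sort (· ≤ ·)).reverse).getD j 0) := by rw [hgd]; exact entryBlock_getD hj
  have hjdesc : j < (((T x).sort (· ≤ ·)).reverse).length := by
    unfold entryBlock at hj; rw [List.length_map] at hj; exact hj
  have hval : (((T x).sort (· ≤ ·)).reverse).getD j 0 = 2 := by
    have hwge := word_getD_entries hplen
    rw [hentry] at hwge
    rw [← hp2, hwge]
  have h2x : 2 ∈ T x := by
    have := getD_mem_of_lt hjdesc
    rw [hval, List.mem_reverse, Finset.mem_sort] at this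
    exact this
  have h1x : 1 ∉ T x := by
    intro h1x
    have := eBar_eval_guard hEw (by rw [hentry]; exact h1x)
    rw [this] at h
    exact absurd h (by simp)
  obtain ⟨hPof, _, _, _⟩ := mem_P_of_before hPQ
  have hbef : ∀ b ∈ revrowBoxes lam, boxBefore b x → 1 ∉ T b ∧ 2 ∉ T b := by
    intro b hb hbb
    have hbP : b ∈ P := hPof b hb hbb
    constructor
    · intro h1b
      obtain ⟨q, hq, hqv, _⟩ := before_box_small hPQ hpj hbP h1b
      exact hno1 q hq hqv
    · intro h2b
      obtain ⟨q, hq, hqv, _⟩ := before_box_small hPQ hpj hbP h2b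
      exact hno2 q hq hqv
  have hothers : ∀ v ∈ T x, v ≠ 2 → 3 ≤ v := by
    intro v hv hv2
    have hv1 : v ≠ 1 := fun e => h1x (e ▸ hv)
    have hv0 : v ≠ 0 := fun e => h0 x hxmem (e ▸ hv)
    omega
  have hU : U = Function.update T x (insert 1 ((T x).erase 2)) := by
    have := eBar_eval_pos hEw (by rw [hentry]; exact h1x)
    rw [hentry] at this
    rw [this] at h
    exact (Option.some.inj h).symm
  exact ⟨x, hxmem, hbef, h0, h2x, h1x, hothers, hU⟩

lemma fbar_some_spec {lam : List ℕ} {T U : ℕ × ℕ → Finset ℕ}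
    (h0 : ∀ b ∈ revrowBoxes lam, 0 ∉ T b)
    (h : fBarCrystal lam T = some U) : ∃ xy, SwapRel lam xy U T := by
  by_cases hFw : ∃ p, p < (revrowWord lam T).length ∧ (revrowWord lam T).getD p 0 = 1 ∧
      ∀ q < p, (revrowWord lam T).getD q 0 ≠ 2
  swap
  · rw [fBar_eval_neg hFw] at h; exact absurd h (by simp)
  obtain ⟨hplen, hp1, hno2⟩ := Nat.find_spec hFw
  have hno1 : ∀ q < Nat.find hFw, (revrowWord lam T).getD q 0 ≠ 1 := by
    intro q hq hq1
    exact Nat.find_min hFw hq ⟨by omega, hq1, fun q' hq' => hno2 q' (by omega)⟩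
  have hplen' : Nat.find hFw < ((revrowBoxes lam).flatMap (entryBlock T)).length := by
    rw [← revrowEntries_eq]
    have : (revrowWord lam T).length = (revrowEntries lam T).length := List.length_map _
    omega
  obtain ⟨P, x, Q, j, hPQ, hj, hpj, hgd⟩ :=
    flatMap_getD_split ((0, 0), 0) (revrowBoxes lam) (entryBlock T) (Nat.find hFw) hplen'
  rw [← revrowEntries_eq] at hgd
  have hxmem : x ∈ revrowBoxes lam := by rw [hPQ]; exact List.mem_append_right _ (by simp)
  have hentry : (revrowEntries lam T).getD (Nat.find hFw) ((0, 0), 0) =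
      (x, (((T x).sort (· ≤ ·)).reverse).getD j 0) := by rw [hgd]; exact entryBlock_getD hj
  have hjdesc : j < (((T x).sort (· ≤ ·)).reverse).length := by
    unfold entryBlock at hj; rw [List.length_map] at hj; exact hj
  have hval : (((T x).sort (· ≤ ·)).reverse).getD j 0 = 1 := by
    have hwge := word_getD_entries hplen
    rw [hentry] at hwge
    rw [← hp1, hwge]
  have h1x : 1 ∈ T x := by
    have := getD_mem_of_lt hjdesc
    rw [hval, List.mem_reverse, Finset.mem_sort] at this
    exact this
  have h2x : 2 ∉ T x := by
    intro h2x
    have h2desc : (2 : ℕ) ∈ ((T x).sort (· ≤ ·)).reverse := by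
      rw [List.mem_reverse, Finset.mem_sort]; exact h2x
    obtain ⟨j', hj', hj'v⟩ := mem_desc_idx (desc_pairwise (T x)) hjdesc h2desc (by omega)
    -- global index of that 2
    have hentries : revrowEntries lam T =
        P.flatMap (entryBlock T) ++ (entryBlock T x ++ Q.flatMap (entryBlock T)) := by
      rw [revrowEntries_eq, hPQ, List.flatMap_append, List.flatMap_cons]
    have hwlen : (revrowWord lam T).length = (revrowEntries lam T).length := List.length_map _
    have hq : (P.flatMap (entryBlock T)).length + j' < Nat.find hFw := by omega
    have hgdq : (revrowEntries lam T).getD ((P.flatMap (entryBlock T)).length + j')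
        ((0, 0), 0) = (x, 2) := by
      rw [hentries, List.getD_append_right _ _ _ _ (by omega)]
      have e : (P.flatMap (entryBlock T)).length + j' - (P.flatMap (entryBlock T)).length
          = j' := by omega
      rw [e, List.getD_append _ _ _ _ (by omega), entryBlock_getD (by omega), hj'v]
    have : (revrowWord lam T).getD ((P.flatMap (entryBlock T)).length + j') 0 = 2 := by
      rw [word_getD_entries (by omega), hgdq]
    exact hno2 _ hq this
  obtain ⟨hPof, _, _, _⟩ := mem_P_of_before hPQ
  have hU : U = Function.update T x (insert 2 ((T x).erase 1)) := by
    have := fBar_eval_pos hFw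
    rw [hentry] at this
    rw [this] at h
    exact (Option.some.inj h).symm
  have hbefU : ∀ b ∈ revrowBoxes lam, boxBefore b x → 1 ∉ U b ∧ 2 ∉ U b := by
    intro b hb hbb
    have hbP : b ∈ P := hPof b hb hbb
    have hbx : b ≠ x := by
      rintro rfl
      exact absurd hbb (boxBefore_irrefl _)
    rw [hU, Function.update_of_ne hbx]
    constructor
    · intro h1b
      obtain ⟨q, hq, hqv, _⟩ := before_box_small hPQ hpj hbP h1b
      exact hno1 q hq hqv
    · intro h2b
      obtain ⟨q, hq, hqv, _⟩ := before_box_small hPQ hpj hbP h2b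
      exact hno2 q hq hqv
  have h0U : ∀ b ∈ revrowBoxes lam, 0 ∉ U b := by
    intro b hb
    by_cases hbx : b = x
    · subst hbx
      rw [hU, Function.update_self]
      intro hc
      rcases Finset.mem_insert.mp hc with hc | hc
      · omega
      · exact h0 b hb (Finset.mem_of_mem_erase hc)
    · rw [hU, Function.update_of_ne hbx]; exact h0 b hb
  have hUx : U x = insert 2 ((T x).erase 1) := by rw [hU, Function.update_self]
  refine ⟨x, hxmem, hbefU, h0U, ?_, ?_, ?_, ?_⟩
  · rw [hUx]; exact Finset.mem_insert_self _ _
  · rw [hUx]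
    intro hc
    rcases Finset.mem_insert.mp hc with hc | hc
    · omega
    · exact (Finset.mem_erase.mp hc).1 rfl
  · rw [hUx]
    intro v hv hv2
    rcases Finset.mem_insert.mp hv with rfl | hv
    · omega
    · have hv1 := (Finset.mem_erase.mp hv).1
      have hvT := Finset.mem_of_mem_erase hv
      have hv0 : v ≠ 0 := fun e => h0 x hxmem (e ▸ hvT)
      have hv2' : v ≠ 2 := fun e => h2x (e ▸ hvT)
      omega
  · funext z
    by_cases hz : z = x
    · subst hz
      rw [Function.update_self, hUx, swapback2 h1x h2x]
    · rw [Function.update_of_ne hz, hU, Function.update_of_ne hz]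
/-! ### Bullets 1, 4, 5 -/

lemma h0_of_tab {n : ℕ} {lam : List ℕ} {T : ℕ × ℕ → Finset ℕ}
    (hT : IsSetDecompTabN n lam T) : ∀ b ∈ revrowBoxes lam, 0 ∉ T b := by
  intro b hb
  have := mem_revrowBoxes.mp hb
  exact (hT.1.1 b.1 b.2 this).2

lemma SwapRel.updErase {lam : List ℕ} {xy : ℕ × ℕ} {T U : ℕ × ℕ → Finset ℕ}
    (h : SwapRel lam xy T U) :
    U xy = insert 1 ((T xy).erase 2) ∧ ∀ b, b ≠ xy → U b = T b := by
  constructor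
  · rw [h.2.2.2.2.2.2, Function.update_self]
  · intro b hb
    rw [h.2.2.2.2.2.2, Function.update_of_ne hb]

lemma ebar_preserves {n : ℕ} {lam : List ℕ} (hn : 2 ≤ n) {T U : ℕ × ℕ → Finset ℕ}
    (hT : IsSetDecompTabN n lam T) (h : eBarCrystal lam T = some U) :
    IsSetDecompTabN n lam U := by
  obtain ⟨xy, hrel⟩ := ebar_some_spec (h0_of_tab hT) h
  obtain ⟨hUxy, hUb⟩ := hrel.updErase
  constructor
  · exact hrel.isSetDecompTab_iff.mp hT.1
  · intro i j hij v hv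
    by_cases hb : ((i, j) : ℕ × ℕ) = xy
    · rw [hb, hUxy] at hv
      rcases Finset.mem_insert.mp hv with rfl | hv
      · omega
      · exact hT.2 i j hij v (by rw [hb]; exact Finset.mem_of_mem_erase hv)
    · rw [hUb _ hb] at hv
      exact hT.2 i j hij v hv

lemma fbar_preserves {n : ℕ} {lam : List ℕ} (hn : 2 ≤ n) {T U : ℕ × ℕ → Finset ℕ}
    (hT : IsSetDecompTabN n lam T) (h : fBarCrystal lam T = some U) :
    IsSetDecompTabN n lam U := by
  obtain ⟨xy, hrel⟩ := fbar_some_spec (h0_of_tab hT) h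
  obtain ⟨hTxy, hTb⟩ := hrel.updErase
  have hUxy : U xy = insert 2 ((T xy).erase 1) := by
    have := swapback1 hrel.2.2.2.1 hrel.2.2.2.2.1
    rw [← hTxy] at this
    exact this.symm
  constructor
  · exact hrel.isSetDecompTab_iff.mpr hT.1
  · intro i j hij v hv
    by_cases hb : ((i, j) : ℕ × ℕ) = xy
    · rw [hb, hUxy] at hv
      rcases Finset.mem_insert.mp hv with rfl | hv
      · omega
      · exact hT.2 i j hij v (by rw [hb]; exact Finset.mem_of_mem_erase hv)
    · rw [← hTb (i, j) hb] at hv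
      exact hT.2 i j hij v hv

lemma bullet4 {n : ℕ} {lam : List ℕ} {T U : ℕ × ℕ → Finset ℕ}
    (hT : IsSetDecompTabN n lam T) (hU : IsSetDecompTabN n lam U) :
    (eBarCrystal lam T = some U ↔ fBarCrystal lam U = some T) := by
  constructor
  · intro h
    obtain ⟨xy, hrel⟩ := ebar_some_spec (h0_of_tab hT) h
    exact fbar_some_of_swapRel hrel
  · intro h
    obtain ⟨xy, hrel⟩ := fbar_some_spec (h0_of_tab hU) h
    exact ebar_some_of_swapRel hrel

lemma swapRel_wt {lam : List ℕ} {xy : ℕ × ℕ} {T U : ℕ × ℕ → Finset ℕ}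
    (h : SwapRel lam xy T U) (k : ℕ) :
    (wtSet lam U k : ℤ) - wtSet lam T k =
      (if k = 1 then 1 else 0) - (if k = 2 then 1 else 0) := by
  obtain ⟨hUxy, hUb⟩ := h.updErase
  obtain ⟨P, Q, hPQ, hxP, hxQ, _, _⟩ := revrowBoxes_decomp h.1
  have h2 := h.2.2.2.1
  have h1 := h.2.2.2.2.1
  unfold wtSet
  rw [hPQ, List.filter_append, List.filter_append, List.filter_cons, List.filter_cons]
  have hPf : P.filter (fun b => decide (k ∈ U b)) = P.filter (fun b => decide (k ∈ T b)) :=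
    List.filter_congr (fun b hb => by rw [hUb b (fun e => hxP (e ▸ hb))])
  have hQf : Q.filter (fun b => decide (k ∈ U b)) = Q.filter (fun b => decide (k ∈ T b)) :=
    List.filter_congr (fun b hb => by rw [hUb b (fun e => hxQ (e ▸ hb))])
  rw [hPf, hQf]
  by_cases hk1 : k = 1
  · subst hk1
    have hUt : (1 : ℕ) ∈ U xy := by rw [hUxy]; exact Finset.mem_insert_self _ _
    rw [if_pos (by simpa using hUt), if_neg (by simpa using h1)]
    simp [List.length_append]
  · by_cases hk2 : k = 2
    · subst hk2
      have hUt : (2 : ℕ) ∉ U xy := by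
        rw [hUxy]
        intro hc
        rcases Finset.mem_insert.mp hc with hc | hc
        · omega
        · exact (Finset.mem_erase.mp hc).1 rfl
      rw [if_neg (by simpa using hUt), if_pos (by simpa using h2)]
      simp [List.length_append, hk1]
    · have hiff : k ∈ U xy ↔ k ∈ T xy := by
        rw [hUxy]
        constructor
        · intro hc
          rcases Finset.mem_insert.mp hc with rfl | hc
          · omega
          · exact Finset.mem_of_mem_erase hc
        · intro hc
          exact Finset.mem_insert_of_mem (Finset.mem_erase.mpr ⟨hk2, hc⟩)
      by_cases hkU : k ∈ U xy
      · rw [if_pos (by simpa using hkU), if_pos (by simpa using hiff.mp hkU)]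
        simp [hk1, hk2]
      · rw [if_neg (by simpa using hkU), if_neg (by simpa using (fun hc => hkU (hiff.mpr hc)))]
        simp [hk1, hk2]

lemma bullet5 {n : ℕ} {lam : List ℕ} {T U : ℕ × ℕ → Finset ℕ}
    (hT : IsSetDecompTabN n lam T) (h : eBarCrystal lam T = some U) :
    ∀ k, (wtSet lam U k : ℤ) - wtSet lam T k =
      (if k = 1 then 1 else 0) - (if k = 2 then 1 else 0) := by
  obtain ⟨xy, hrel⟩ := ebar_some_spec (h0_of_tab hT) h
  exact swapRel_wt hrel
/-! ### Word congruences for letters ≥ 3 -/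

lemma closeCount_mid {i x : ℕ} (hx1 : x ≠ i) (hx2 : x ≠ i + 1) (A B : List ℕ) :
    closeCount i (A ++ x :: B) = closeCount i (A ++ B) := by
  unfold closeCount
  rw [List.foldr_append, List.foldr_append, List.foldr_cons]
  simp [hx1, hx2]

lemma openCount_mid {i x : ℕ} (hx1 : x ≠ i) (hx2 : x ≠ i + 1) (A B : List ℕ) :
    openCount i (A ++ x :: B) = openCount i (A ++ B) := by
  unfold openCount
  rw [List.foldl_append, List.foldl_append, List.foldl_cons]
  simp [hx1, hx2]

lemma drop_mid_lt {α : Type*} {W1 W2 : List α} {x : α} {p : ℕ} (h : p + 1 ≤ W1.length) :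
    (W1 ++ x :: W2).drop (p + 1) = W1.drop (p + 1) ++ x :: W2 :=
  List.drop_append_of_le_length h

lemma drop_mid_ge {α : Type*} {W1 W2 : List α} {x : α} {p : ℕ} (h : W1.length ≤ p) :
    (W1 ++ x :: W2).drop (p + 1) = W2.drop (p - W1.length) := by
  rw [List.drop_append]
  rw [List.drop_eq_nil_of_le (by omega), List.nil_append]
  have e : p + 1 - W1.length = (p - W1.length) + 1 := by omega
  rw [e, List.drop_succ_cons]

lemma take_mid_le {α : Type*} {W1 W2 : List α} {x : α} {p : ℕ} (h : p ≤ W1.length) :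
    (W1 ++ x :: W2).take p = W1.take p :=
  List.take_append_of_le_length h

lemma take_mid_gt {α : Type*} {W1 W2 : List α} {x : α} {p : ℕ} (h : W1.length < p) :
    (W1 ++ x :: W2).take p = W1 ++ x :: W2.take (p - W1.length - 1) := by
  rw [List.take_append, List.take_of_length_le (by omega)]
  have e : p - W1.length = (p - W1.length - 1) + 1 := by omega
  conv_lhs => rw [e, List.take_succ_cons]

lemma unpairedHigh_mid {i x y : ℕ} (hi : 3 ≤ i) (hx : 1 ≤ x) (hx2 : x ≤ 2)
    (hy : 1 ≤ y) (hy2 : y ≤ 2) (W1 W2 : List ℕ) (p : ℕ)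
    (h : UnpairedHigh i (W1 ++ x :: W2) p) : UnpairedHigh i (W1 ++ y :: W2) p := by
  obtain ⟨hlen, hval, hcc⟩ := h
  rw [wlen] at hlen
  refine ⟨by rw [wlen]; omega, ?_, ?_⟩
  · rcases Nat.lt_trichotomy p W1.length with hp | hp | hp
    · rw [wget_lt hp] at hval ⊢; exact hval
    · rw [wget_eq hp] at hval; omega
    · rw [wget_gt hp] at hval ⊢; exact hval
  · rcases Nat.lt_or_ge (p + 1) (W1.length + 1) with hp | hp
    · rw [drop_mid_lt (by omega)] at hcc ⊢
      rw [closeCount_mid (by omega) (by omega)] at hcc ⊢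
      exact hcc
    · rw [drop_mid_ge (by omega)] at hcc ⊢
      exact hcc

lemma unpairedLow_mid {i x y : ℕ} (hi : 3 ≤ i) (hx : 1 ≤ x) (hx2 : x ≤ 2)
    (hy : 1 ≤ y) (hy2 : y ≤ 2) (W1 W2 : List ℕ) (p : ℕ)
    (h : UnpairedLow i (W1 ++ x :: W2) p) : UnpairedLow i (W1 ++ y :: W2) p := by
  obtain ⟨hlen, hval, hoc⟩ := h
  rw [wlen] at hlen
  refine ⟨by rw [wlen]; omega, ?_, ?_⟩
  · rcases Nat.lt_trichotomy p W1.length with hp | hp | hp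
    · rw [wget_lt hp] at hval ⊢; exact hval
    · rw [wget_eq hp] at hval; omega
    · rw [wget_gt hp] at hval ⊢; exact hval
  · rcases Nat.lt_or_ge W1.length p with hp | hp
    · rw [take_mid_gt hp] at hoc ⊢
      rw [openCount_mid (by omega) (by omega)] at hoc ⊢
      exact hoc
    · rw [take_mid_le hp] at hoc ⊢
      exact hoc

lemma find_congr {P Q : ℕ → Prop} [DecidablePred P] [DecidablePred Q]
    (hPQ : ∀ n, P n ↔ Q n) (hP : ∃ n, P n) (hQ : ∃ n, Q n) :
    Nat.find hP = Nat.find hQ :=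
  le_antisymm (Nat.find_le ((hPQ _).mpr (Nat.find_spec hQ)))
    (Nat.find_le ((hPQ _).mp (Nat.find_spec hP)))

lemma findGreatest_congr {P Q : ℕ → Prop} [DecidablePred P] [DecidablePred Q]
    (h : ∀ n, P n ↔ Q n) : ∀ b, Nat.findGreatest P b = Nat.findGreatest Q b := by
  intro b
  induction b with
  | zero => rfl
  | succ b ih =>
    rw [Nat.findGreatest_succ, Nat.findGreatest_succ]
    by_cases hp : P (b + 1)
    · rw [if_pos hp, if_pos ((h _).mp hp)]
    · rw [if_neg hp, if_neg (fun hq => hp ((h _).mpr hq)), ih]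

/-! ### SwapRel: word-level consequences -/

lemma SwapRel.word_len {lam : List ℕ} {xy : ℕ × ℕ} {T T' : ℕ × ℕ → Finset ℕ}
    (h : SwapRel lam xy T T') :
    (revrowWord lam T').length = (revrowWord lam T).length := by
  obtain ⟨E1, E2, _, _, _, hw, hw'⟩ := h.words
  rw [hw, hw', wlen, wlen]

lemma SwapRel.unpairedHigh_iff {lam : List ℕ} {xy : ℕ × ℕ} {T T' : ℕ × ℕ → Finset ℕ}
    {i : ℕ} (hi : 3 ≤ i) (h : SwapRel lam xy T T') (p : ℕ) :
    UnpairedHigh i (revrowWord lam T) p ↔ UnpairedHigh i (revrowWord lam T') p := by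
  obtain ⟨E1, E2, _, _, _, hw, hw'⟩ := h.words
  rw [hw, hw']
  exact ⟨unpairedHigh_mid hi (by omega) (by omega) (by omega) (by omega) _ _ p,
    unpairedHigh_mid hi (by omega) (by omega) (by omega) (by omega) _ _ p⟩

lemma SwapRel.unpairedLow_iff {lam : List ℕ} {xy : ℕ × ℕ} {T T' : ℕ × ℕ → Finset ℕ}
    {i : ℕ} (hi : 3 ≤ i) (h : SwapRel lam xy T T') (p : ℕ) :
    UnpairedLow i (revrowWord lam T) p ↔ UnpairedLow i (revrowWord lam T') p := by
  obtain ⟨E1, E2, _, _, _, hw, hw'⟩ := h.words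
  rw [hw, hw']
  exact ⟨unpairedLow_mid hi (by omega) (by omega) (by omega) (by omega) _ _ p,
    unpairedLow_mid hi (by omega) (by omega) (by omega) (by omega) _ _ p⟩

lemma SwapRel.entries_fst {lam : List ℕ} {xy : ℕ × ℕ} {T T' : ℕ × ℕ → Finset ℕ}
    (h : SwapRel lam xy T T') (q : ℕ) :
    ((revrowEntries lam T').getD q ((0, 0), 0)).1 =
      ((revrowEntries lam T).getD q ((0, 0), 0)).1 := by
  obtain ⟨E1, E2, hE, hE', _, _, _⟩ := h.words
  rw [hE, hE']
  rcases Nat.lt_trichotomy q E1.length with hq | hq | hq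
  · rw [gget_lt hq, gget_lt hq]
  · rw [gget_eq hq, gget_eq hq]
  · rw [gget_gt hq, gget_gt hq]

lemma SwapRel.mem_ge3 {lam : List ℕ} {xy : ℕ × ℕ} {T T' : ℕ × ℕ → Finset ℕ}
    (h : SwapRel lam xy T T') {v : ℕ} (hv : v ≠ 1) (hv2 : v ≠ 2) (b : ℕ × ℕ) :
    v ∈ T' b ↔ v ∈ T b := by
  by_cases hb : b = xy
  · subst hb
    rw [(h.updErase).1]
    constructor
    · intro hc
      rcases Finset.mem_insert.mp hc with rfl | hc
      · omega
      · exact Finset.mem_of_mem_erase hc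
    · intro hc
      exact Finset.mem_insert_of_mem (Finset.mem_erase.mpr ⟨hv2, hc⟩)
  · rw [(h.updErase).2 b hb]
/-! ### Evaluation lemmas for the gl operators -/

section evalLemmas
variable {lam : List ℕ} {i : ℕ} {T : ℕ × ℕ → Finset ℕ}

lemma eC_eval_none (hex : ¬ ∃ p, UnpairedHigh i (revrowWord lam T) p) :
    eCrystal lam i T = none := by
  simp only [eCrystal]
  rw [dif_neg hex]

lemma eC_eval_inplace (hex : ∃ p, UnpairedHigh i (revrowWord lam T) p)
    (h1 : IsSetDecompTab lam (Function.update T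
      ((revrowEntries lam T).getD (Nat.find hex) ((0, 0), 0)).1
      (insert i ((T ((revrowEntries lam T).getD (Nat.find hex) ((0, 0), 0)).1).erase (i + 1))))) :
    eCrystal lam i T = some (Function.update T
      ((revrowEntries lam T).getD (Nat.find hex) ((0, 0), 0)).1
      (insert i ((T ((revrowEntries lam T).getD (Nat.find hex) ((0, 0), 0)).1).erase (i + 1)))) := by
  simp only [eCrystal]
  rw [dif_pos hex]
  simp only [if_pos h1]

lemma eC_eval_move (hex : ∃ p, UnpairedHigh i (revrowWord lam T) p)
    (h1 : ¬ IsSetDecompTab lam (Function.update T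
      ((revrowEntries lam T).getD (Nat.find hex) ((0, 0), 0)).1
      (insert i ((T ((revrowEntries lam T).getD (Nat.find hex) ((0, 0), 0)).1).erase (i + 1)))))
    (hab : ∃ m, m < boxIdx lam ((revrowEntries lam T).getD (Nat.find hex) ((0, 0), 0)).1 ∧
      i ∈ T ((revrowBoxes lam).getD m (0, 0)) ∧
      i + 1 ∈ T ((revrowBoxes lam).getD m (0, 0))) :
    eCrystal lam i T = some (Function.update (Function.update T
      ((revrowBoxes lam).getD (Nat.findGreatest (fun m =>
        m < boxIdx lam ((revrowEntries lam T).getD (Nat.find hex) ((0, 0), 0)).1 ∧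
        i ∈ T ((revrowBoxes lam).getD m (0, 0)) ∧
        i + 1 ∈ T ((revrowBoxes lam).getD m (0, 0)))
        (boxIdx lam ((revrowEntries lam T).getD (Nat.find hex) ((0, 0), 0)).1)) (0, 0))
      ((T ((revrowBoxes lam).getD (Nat.findGreatest (fun m =>
        m < boxIdx lam ((revrowEntries lam T).getD (Nat.find hex) ((0, 0), 0)).1 ∧
        i ∈ T ((revrowBoxes lam).getD m (0, 0)) ∧
        i + 1 ∈ T ((revrowBoxes lam).getD m (0, 0)))
        (boxIdx lam ((revrowEntries lam T).getD (Nat.find hex) ((0, 0), 0)).1)) (0, 0))).erase (i + 1)))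
      ((revrowEntries lam T).getD (Nat.find hex) ((0, 0), 0)).1
      (insert i (T ((revrowEntries lam T).getD (Nat.find hex) ((0, 0), 0)).1))) := by
  simp only [eCrystal]
  rw [dif_pos hex]
  simp only [if_neg h1]
  rw [dif_pos hab]

lemma eC_eval_nomove (hex : ∃ p, UnpairedHigh i (revrowWord lam T) p)
    (h1 : ¬ IsSetDecompTab lam (Function.update T
      ((revrowEntries lam T).getD (Nat.find hex) ((0, 0), 0)).1
      (insert i ((T ((revrowEntries lam T).getD (Nat.find hex) ((0, 0), 0)).1).erase (i + 1)))))
    (hab : ¬ ∃ m, m < boxIdx lam ((revrowEntries lam T).getD (Nat.find hex) ((0, 0), 0)).1 ∧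
      i ∈ T ((revrowBoxes lam).getD m (0, 0)) ∧
      i + 1 ∈ T ((revrowBoxes lam).getD m (0, 0))) :
    eCrystal lam i T = none := by
  simp only [eCrystal]
  rw [dif_pos hex]
  simp only [if_neg h1]
  rw [dif_neg hab]

lemma fC_eval_none (hex : ¬ ∃ p, UnpairedLow i (revrowWord lam T) p) :
    fCrystal lam i T = none := by
  simp only [fCrystal]
  rw [dif_neg hex]

lemma fC_eval_inplace (hex : ∃ p, UnpairedLow i (revrowWord lam T) p)
    (h1 : IsSetDecompTab lam (Function.update T
      ((revrowEntries lam T).getD (Nat.findGreatest (fun p => UnpairedLow i (revrowWord lam T) p)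
        (revrowWord lam T).length) ((0, 0), 0)).1
      (insert (i + 1) ((T ((revrowEntries lam T).getD
        (Nat.findGreatest (fun p => UnpairedLow i (revrowWord lam T) p)
        (revrowWord lam T).length) ((0, 0), 0)).1).erase i)))) :
    fCrystal lam i T = some (Function.update T
      ((revrowEntries lam T).getD (Nat.findGreatest (fun p => UnpairedLow i (revrowWord lam T) p)
        (revrowWord lam T).length) ((0, 0), 0)).1
      (insert (i + 1) ((T ((revrowEntries lam T).getD
        (Nat.findGreatest (fun p => UnpairedLow i (revrowWord lam T) p)
        (revrowWord lam T).length) ((0, 0), 0)).1).erase i))) := by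
  simp only [fCrystal]
  rw [dif_pos hex]
  simp only [if_pos h1]

lemma fC_eval_move (hex : ∃ p, UnpairedLow i (revrowWord lam T) p)
    (h1 : ¬ IsSetDecompTab lam (Function.update T
      ((revrowEntries lam T).getD (Nat.findGreatest (fun p => UnpairedLow i (revrowWord lam T) p)
        (revrowWord lam T).length) ((0, 0), 0)).1
      (insert (i + 1) ((T ((revrowEntries lam T).getD
        (Nat.findGreatest (fun p => UnpairedLow i (revrowWord lam T) p)
        (revrowWord lam T).length) ((0, 0), 0)).1).erase i))))
    (hab : ∃ m, boxIdx lam ((revrowEntries lam T).getD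
        (Nat.findGreatest (fun p => UnpairedLow i (revrowWord lam T) p)
        (revrowWord lam T).length) ((0, 0), 0)).1 < m ∧
      m < (revrowBoxes lam).length ∧
      i ∈ T ((revrowBoxes lam).getD m (0, 0)) ∧
      i + 1 ∈ T ((revrowBoxes lam).getD m (0, 0))) :
    fCrystal lam i T = some (Function.update (Function.update T
      ((revrowBoxes lam).getD (Nat.find hab) (0, 0))
      ((T ((revrowBoxes lam).getD (Nat.find hab) (0, 0))).erase i))
      ((revrowEntries lam T).getD (Nat.findGreatest (fun p => UnpairedLow i (revrowWord lam T) p)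
        (revrowWord lam T).length) ((0, 0), 0)).1
      (insert (i + 1) (T ((revrowEntries lam T).getD
        (Nat.findGreatest (fun p => UnpairedLow i (revrowWord lam T) p)
        (revrowWord lam T).length) ((0, 0), 0)).1))) := by
  simp only [fCrystal]
  rw [dif_pos hex]
  simp only [if_neg h1]
  rw [dif_pos hab]

lemma fC_eval_nomove (hex : ∃ p, UnpairedLow i (revrowWord lam T) p)
    (h1 : ¬ IsSetDecompTab lam (Function.update T
      ((revrowEntries lam T).getD (Nat.findGreatest (fun p => UnpairedLow i (revrowWord lam T) p)
        (revrowWord lam T).length) ((0, 0), 0)).1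
      (insert (i + 1) ((T ((revrowEntries lam T).getD
        (Nat.findGreatest (fun p => UnpairedLow i (revrowWord lam T) p)
        (revrowWord lam T).length) ((0, 0), 0)).1).erase i))))
    (hab : ¬ ∃ m, boxIdx lam ((revrowEntries lam T).getD
        (Nat.findGreatest (fun p => UnpairedLow i (revrowWord lam T) p)
        (revrowWord lam T).length) ((0, 0), 0)).1 < m ∧
      m < (revrowBoxes lam).length ∧
      i ∈ T ((revrowBoxes lam).getD m (0, 0)) ∧
      i + 1 ∈ T ((revrowBoxes lam).getD m (0, 0))) :
    fCrystal lam i T = none := by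
  simp only [fCrystal]
  rw [dif_pos hex]
  simp only [if_neg h1]
  rw [dif_neg hab]

end evalLemmas
/-! ### Finset identities for big letters -/

lemma fs_erase {X : Finset ℕ} {b : ℕ} (hb : 3 ≤ b) :
    (insert 1 (X.erase 2)).erase b = insert 1 ((X.erase b).erase 2) := by
  ext v
  simp only [Finset.mem_insert, Finset.mem_erase]
  constructor
  · rintro ⟨hvb, (rfl | ⟨hv2, hvX⟩)⟩
    · exact Or.inl rfl
    · exact Or.inr ⟨hv2, hvb, hvX⟩
  · rintro (rfl | ⟨hv2, hvb, hvX⟩)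
    · exact ⟨by omega, Or.inl rfl⟩
    · exact ⟨hvb, Or.inr ⟨hv2, hvX⟩⟩

lemma fs_ins {X : Finset ℕ} {a : ℕ} (ha : 3 ≤ a) :
    insert a (insert 1 (X.erase 2)) = insert 1 ((insert a X).erase 2) := by
  ext v
  simp only [Finset.mem_insert, Finset.mem_erase]
  constructor
  · rintro (rfl | (rfl | ⟨hv2, hvX⟩))
    · exact Or.inr ⟨by omega, Or.inl rfl⟩
    · exact Or.inl rfl
    · exact Or.inr ⟨hv2, Or.inr hvX⟩
  · rintro (rfl | ⟨hv2, (rfl | hvX)⟩)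
    · exact Or.inr (Or.inl rfl)
    · exact Or.inl rfl
    · exact Or.inr (Or.inr ⟨hv2, hvX⟩)

lemma fs_ins_erase {X : Finset ℕ} {a b : ℕ} (ha : 3 ≤ a) (hb : 3 ≤ b) :
    insert a ((insert 1 (X.erase 2)).erase b) =
      insert 1 ((insert a (X.erase b)).erase 2) := by
  rw [fs_erase hb, fs_ins ha]

lemma mem_small_ins {X : Finset ℕ} {a v : ℕ} (ha : 3 ≤ a) (hv : v ≤ 2) :
    v ∈ insert a X ↔ v ∈ X := by
  rw [Finset.mem_insert]
  constructor
  · rintro (rfl | h)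
    · omega
    · exact h
  · exact Or.inr

lemma mem_small_erase {X : Finset ℕ} {b v : ℕ} (hb : 3 ≤ b) (hv : v ≤ 2) :
    v ∈ X.erase b ↔ v ∈ X := by
  rw [Finset.mem_erase]
  exact ⟨fun h => h.2, fun h => ⟨by omega, h⟩⟩

lemma mem_small_ins_erase {X : Finset ℕ} {a b v : ℕ} (ha : 3 ≤ a) (hb : 3 ≤ b)
    (hv : v ≤ 2) : v ∈ insert a (X.erase b) ↔ v ∈ X := by
  rw [mem_small_ins ha hv, mem_small_erase hb hv]

/-! ### Transporting SwapRel through updates -/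

lemma swapRel_images {lam : List ℕ} {xy : ℕ × ℕ} {T T' V V' : ℕ × ℕ → Finset ℕ}
    (h : SwapRel lam xy T T')
    (hsame : ∀ b, ∀ v ≤ 2, v ∈ V b ↔ v ∈ T b)
    (hV'b : ∀ b, b ≠ xy → V' b = V b)
    (hV'xy : V' xy = insert 1 ((V xy).erase 2)) :
    SwapRel lam xy V V' := by
  refine ⟨h.1, ?_, ?_, ?_, ?_, ?_, ?_⟩
  · intro b hb hbb
    have hh := h.2.1 b hb hbb
    exact ⟨fun hc => hh.1 ((hsame b 1 (by omega)).mp hc),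
      fun hc => hh.2 ((hsame b 2 (by omega)).mp hc)⟩
  · intro b hb
    exact fun hc => h.2.2.1 b hb ((hsame b 0 (by omega)).mp hc)
  · exact (hsame xy 2 (by omega)).mpr h.2.2.2.1
  · exact fun hc => h.2.2.2.2.1 ((hsame xy 1 (by omega)).mp hc)
  · intro v hv hv2
    have hv1 : v ≠ 1 := fun e => h.2.2.2.2.1 ((hsame xy 1 (by omega)).mp (e ▸ hv))
    have hv0 : v ≠ 0 := fun e => h.2.2.1 xy h.1 ((hsame xy 0 (by omega)).mp (e ▸ hv))
    omega
  · funext z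
    by_cases hz : z = xy
    · subst hz; rw [Function.update_self, hV'xy]
    · rw [Function.update_of_ne hz, hV'b z hz]
/-! ### Propagation of SwapRel through the gl operators -/

lemma swapRel_eCrystal {lam : List ℕ} {xy : ℕ × ℕ} {T T' : ℕ × ℕ → Finset ℕ} {i : ℕ}
    (hi : 3 ≤ i) (h : SwapRel lam xy T T') :
    (eCrystal lam i T = none ∧ eCrystal lam i T' = none) ∨
    (∃ V V', eCrystal lam i T = some V ∧ eCrystal lam i T' = some V' ∧
      SwapRel lam xy V V') := by
  by_cases hex : ∃ p, UnpairedHigh i (revrowWord lam T) p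
  swap
  · left
    exact ⟨eC_eval_none hex,
      eC_eval_none (fun ⟨p, hp⟩ => hex ⟨p, (h.unpairedHigh_iff hi p).mpr hp⟩)⟩
  have hex' : ∃ p, UnpairedHigh i (revrowWord lam T') p :=
    hex.imp (fun p hp => (h.unpairedHigh_iff hi p).mp hp)
  have hfind : Nat.find hex' = Nat.find hex :=
    find_congr (fun p => (h.unpairedHigh_iff hi p).symm) hex' hex
  set bx := ((revrowEntries lam T).getD (Nat.find hex) ((0, 0), 0)).1 with hbxdef
  have hfst : ((revrowEntries lam T').getD (Nat.find hex') ((0, 0), 0)).1 = bx := by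
    rw [hfind]
    exact (h.entries_fst _).trans hbxdef.symm
  have hrel1 : SwapRel lam xy (Function.update T bx (insert i ((T bx).erase (i+1))))
      (Function.update T' bx (insert i ((T' bx).erase (i+1)))) := by
    apply swapRel_images h
    · intro b v hv
      by_cases hb : b = bx
      · subst hb
        rw [Function.update_self]
        exact mem_small_ins_erase (by omega) (by omega) hv
      · rw [Function.update_of_ne hb]
    · intro b hbxy
      by_cases hb : b = bx
      · subst hb
        rw [Function.update_self, Function.update_self, (h.updErase).2 _ hbxy]
      · rw [Function.update_of_ne hb, Function.update_of_ne hb, (h.updErase).2 _ hbxy]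
    · by_cases hxybx : xy = bx
      · have e1 : T' bx = insert 1 ((T bx).erase 2) := by
          rw [← hxybx]; exact (h.updErase).1
        rw [hxybx, Function.update_self, Function.update_self, e1]
        exact fs_ins_erase (by omega) (by omega)
      · rw [Function.update_of_ne hxybx, Function.update_of_ne hxybx, (h.updErase).1]
  by_cases htab : IsSetDecompTab lam (Function.update T bx (insert i ((T bx).erase (i+1))))
  · right
    have htab' : IsSetDecompTab lam
        (Function.update T' bx (insert i ((T' bx).erase (i+1)))) :=
      hrel1.isSetDecompTab_iff.mp htab
    have heT : eCrystal lam i T =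
        some (Function.update T bx (insert i ((T bx).erase (i+1)))) := by
      have h1 := htab
      rw [hbxdef] at h1 ⊢
      exact eC_eval_inplace hex h1
    have heT' : eCrystal lam i T' =
        some (Function.update T' bx (insert i ((T' bx).erase (i+1)))) := by
      have h1 := htab'
      rw [← hfst] at h1 ⊢
      exact eC_eval_inplace hex' h1
    exact ⟨_, _, heT, heT', hrel1⟩
  · have htab' : ¬ IsSetDecompTab lam
        (Function.update T' bx (insert i ((T' bx).erase (i+1)))) :=
      fun hc => htab (hrel1.isSetDecompTab_iff.mpr hc)
    have hpred : ∀ m, (m < boxIdx lam bx ∧ i ∈ T' ((revrowBoxes lam).getD m (0, 0)) ∧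
        i + 1 ∈ T' ((revrowBoxes lam).getD m (0, 0))) ↔
        (m < boxIdx lam bx ∧ i ∈ T ((revrowBoxes lam).getD m (0, 0)) ∧
        i + 1 ∈ T ((revrowBoxes lam).getD m (0, 0))) := by
      intro m
      have h1 := h.mem_ge3 (show (i : ℕ) ≠ 1 by omega) (show (i : ℕ) ≠ 2 by omega)
        ((revrowBoxes lam).getD m (0, 0))
      have h2 := h.mem_ge3 (show i + 1 ≠ 1 by omega) (show i + 1 ≠ 2 by omega)
        ((revrowBoxes lam).getD m (0, 0))
      tauto
    by_cases hab : ∃ m, m < boxIdx lam bx ∧ i ∈ T ((revrowBoxes lam).getD m (0, 0)) ∧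
        i + 1 ∈ T ((revrowBoxes lam).getD m (0, 0))
    · right
      have hab' : ∃ m, m < boxIdx lam bx ∧ i ∈ T' ((revrowBoxes lam).getD m (0, 0)) ∧
          i + 1 ∈ T' ((revrowBoxes lam).getD m (0, 0)) :=
        hab.imp (fun m hm => (hpred m).mpr hm)
      have hfg : Nat.findGreatest (fun m => m < boxIdx lam bx ∧
          i ∈ T' ((revrowBoxes lam).getD m (0, 0)) ∧
          i + 1 ∈ T' ((revrowBoxes lam).getD m (0, 0))) (boxIdx lam bx) =
        Nat.findGreatest (fun m => m < boxIdx lam bx ∧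
          i ∈ T ((revrowBoxes lam).getD m (0, 0)) ∧
          i + 1 ∈ T ((revrowBoxes lam).getD m (0, 0))) (boxIdx lam bx) :=
        findGreatest_congr hpred _
      set ab := (revrowBoxes lam).getD (Nat.findGreatest (fun m => m < boxIdx lam bx ∧
          i ∈ T ((revrowBoxes lam).getD m (0, 0)) ∧
          i + 1 ∈ T ((revrowBoxes lam).getD m (0, 0))) (boxIdx lam bx)) (0, 0) with habdef
      have heT : eCrystal lam i T = some (Function.update
          (Function.update T ab ((T ab).erase (i + 1))) bx (insert i (T bx))) := by
        have h1 := htab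
        have h2 := hab
        rw [habdef, hbxdef]
        rw [hbxdef] at h1 h2
        exact eC_eval_move hex h1 h2
      have heT' : eCrystal lam i T' = some (Function.update
          (Function.update T' ab ((T' ab).erase (i + 1))) bx (insert i (T' bx))) := by
        have h1 := htab'
        have h2 := hab'
        rw [habdef, ← hfg]
        rw [← hfst] at h1 h2 ⊢
        exact eC_eval_move hex' h1 h2
      refine ⟨_, _, heT, heT', ?_⟩
      apply swapRel_images h
      · intro b v hv
        by_cases hb : b = bx
        · subst hb
          rw [Function.update_self]
          exact mem_small_ins (by omega) hv
        · rw [Function.update_of_ne hb]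
          by_cases hb2 : b = ab
          · subst hb2
            rw [Function.update_self]
            exact mem_small_erase (by omega) hv
          · rw [Function.update_of_ne hb2]
      · intro b hbxy
        by_cases hb : b = bx
        · subst hb
          rw [Function.update_self, Function.update_self, (h.updErase).2 _ hbxy]
        · rw [Function.update_of_ne hb, Function.update_of_ne hb]
          by_cases hb2 : b = ab
          · subst hb2
            rw [Function.update_self, Function.update_self, (h.updErase).2 _ hbxy]
          · rw [Function.update_of_ne hb2, Function.update_of_ne hb2,
              (h.updErase).2 _ hbxy]
      · by_cases hxybx : xy = bx
        · have e1 : T' bx = insert 1 ((T bx).erase 2) := by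
            rw [← hxybx]; exact (h.updErase).1
          rw [hxybx, Function.update_self, Function.update_self, e1]
          exact fs_ins (by omega)
        · rw [Function.update_of_ne hxybx, Function.update_of_ne hxybx]
          by_cases hxyab : xy = ab
          · have e1 : T' ab = insert 1 ((T ab).erase 2) := by
              rw [← hxyab]; exact (h.updErase).1
            rw [hxyab, Function.update_self, Function.update_self, e1]
            exact fs_erase (by omega)
          · rw [Function.update_of_ne hxyab, Function.update_of_ne hxyab,
              (h.updErase).1]
    · left
      have hab' : ¬ ∃ m, m < boxIdx lam bx ∧ i ∈ T' ((revrowBoxes lam).getD m (0, 0)) ∧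
          i + 1 ∈ T' ((revrowBoxes lam).getD m (0, 0)) :=
        fun hc => hab (hc.imp (fun m hm => (hpred m).mp hm))
      constructor
      · have h1 := htab
        have h2 := hab
        rw [hbxdef] at h1 h2
        exact eC_eval_nomove hex h1 h2
      · have h1 := htab'
        have h2 := hab'
        rw [← hfst] at h1 h2
        exact eC_eval_nomove hex' h1 h2
lemma swapRel_fCrystal {lam : List ℕ} {xy : ℕ × ℕ} {T T' : ℕ × ℕ → Finset ℕ} {i : ℕ}
    (hi : 3 ≤ i) (h : SwapRel lam xy T T') :
    (fCrystal lam i T = none ∧ fCrystal lam i T' = none) ∨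
    (∃ V V', fCrystal lam i T = some V ∧ fCrystal lam i T' = some V' ∧
      SwapRel lam xy V V') := by
  by_cases hex : ∃ p, UnpairedLow i (revrowWord lam T) p
  swap
  · left
    exact ⟨fC_eval_none hex,
      fC_eval_none (fun ⟨p, hp⟩ => hex ⟨p, (h.unpairedLow_iff hi p).mpr hp⟩)⟩
  have hex' : ∃ p, UnpairedLow i (revrowWord lam T') p :=
    hex.imp (fun p hp => (h.unpairedLow_iff hi p).mp hp)
  have hpos : Nat.findGreatest (fun p => UnpairedLow i (revrowWord lam T') p)
      (revrowWord lam T').length =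
      Nat.findGreatest (fun p => UnpairedLow i (revrowWord lam T) p)
      (revrowWord lam T).length := by
    rw [h.word_len]
    exact findGreatest_congr (fun p => (h.unpairedLow_iff hi p).symm) _
  set bx := ((revrowEntries lam T).getD (Nat.findGreatest
      (fun p => UnpairedLow i (revrowWord lam T) p)
      (revrowWord lam T).length) ((0, 0), 0)).1 with hbxdef
  have hfst : ((revrowEntries lam T').getD (Nat.findGreatest
      (fun p => UnpairedLow i (revrowWord lam T') p)
      (revrowWord lam T').length) ((0, 0), 0)).1 = bx := by
    rw [hpos]
    exact (h.entries_fst _).trans hbxdef.symm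
  have hrel1 : SwapRel lam xy (Function.update T bx (insert (i+1) ((T bx).erase i)))
      (Function.update T' bx (insert (i+1) ((T' bx).erase i))) := by
    apply swapRel_images h
    · intro b v hv
      by_cases hb : b = bx
      · subst hb
        rw [Function.update_self]
        exact mem_small_ins_erase (by omega) (by omega) hv
      · rw [Function.update_of_ne hb]
    · intro b hbxy
      by_cases hb : b = bx
      · subst hb
        rw [Function.update_self, Function.update_self, (h.updErase).2 _ hbxy]
      · rw [Function.update_of_ne hb, Function.update_of_ne hb, (h.updErase).2 _ hbxy]
    · by_cases hxybx : xy = bx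
      · have e1 : T' bx = insert 1 ((T bx).erase 2) := by
          rw [← hxybx]; exact (h.updErase).1
        rw [hxybx, Function.update_self, Function.update_self, e1]
        exact fs_ins_erase (by omega) (by omega)
      · rw [Function.update_of_ne hxybx, Function.update_of_ne hxybx, (h.updErase).1]
  by_cases htab : IsSetDecompTab lam (Function.update T bx (insert (i+1) ((T bx).erase i)))
  · right
    have htab' : IsSetDecompTab lam
        (Function.update T' bx (insert (i+1) ((T' bx).erase i))) :=
      hrel1.isSetDecompTab_iff.mp htab
    have heT : fCrystal lam i T =
        some (Function.update T bx (insert (i+1) ((T bx).erase i))) := by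
      have h1 := htab
      rw [hbxdef] at h1 ⊢
      exact fC_eval_inplace hex h1
    have heT' : fCrystal lam i T' =
        some (Function.update T' bx (insert (i+1) ((T' bx).erase i))) := by
      have h1 := htab'
      rw [← hfst] at h1 ⊢
      exact fC_eval_inplace hex' h1
    exact ⟨_, _, heT, heT', hrel1⟩
  · have htab' : ¬ IsSetDecompTab lam
        (Function.update T' bx (insert (i+1) ((T' bx).erase i))) :=
      fun hc => htab (hrel1.isSetDecompTab_iff.mpr hc)
    have hpred : ∀ m, (boxIdx lam bx < m ∧ m < (revrowBoxes lam).length ∧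
        i ∈ T' ((revrowBoxes lam).getD m (0, 0)) ∧
        i + 1 ∈ T' ((revrowBoxes lam).getD m (0, 0))) ↔
        (boxIdx lam bx < m ∧ m < (revrowBoxes lam).length ∧
        i ∈ T ((revrowBoxes lam).getD m (0, 0)) ∧
        i + 1 ∈ T ((revrowBoxes lam).getD m (0, 0))) := by
      intro m
      have h1 := h.mem_ge3 (show (i : ℕ) ≠ 1 by omega) (show (i : ℕ) ≠ 2 by omega)
        ((revrowBoxes lam).getD m (0, 0))
      have h2 := h.mem_ge3 (show i + 1 ≠ 1 by omega) (show i + 1 ≠ 2 by omega)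
        ((revrowBoxes lam).getD m (0, 0))
      tauto
    by_cases hab : ∃ m, boxIdx lam bx < m ∧ m < (revrowBoxes lam).length ∧
        i ∈ T ((revrowBoxes lam).getD m (0, 0)) ∧
        i + 1 ∈ T ((revrowBoxes lam).getD m (0, 0))
    · right
      have hab' : ∃ m, boxIdx lam bx < m ∧ m < (revrowBoxes lam).length ∧
          i ∈ T' ((revrowBoxes lam).getD m (0, 0)) ∧
          i + 1 ∈ T' ((revrowBoxes lam).getD m (0, 0)) :=
        hab.imp (fun m hm => (hpred m).mpr hm)
      set ab := (revrowBoxes lam).getD (Nat.find hab) (0, 0) with habdef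
      have heT : fCrystal lam i T = some (Function.update
          (Function.update T ab ((T ab).erase i)) bx (insert (i+1) (T bx))) := by
        have h1 := htab
        rw [hbxdef] at h1
        have h2 := hab
        rw [hbxdef] at h2
        have heval := fC_eval_move hex h1 h2
        have hff : Nat.find h2 = Nat.find hab := by
          apply find_congr _ h2 hab
          intro m
          rw [hbxdef]
        rw [hff] at heval
        rw [← hbxdef] at heval
        rw [← habdef] at heval
        exact heval
      have heT' : fCrystal lam i T' = some (Function.update
          (Function.update T' ab ((T' ab).erase i)) bx (insert (i+1) (T' bx))) := by
        have h1 := htab'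
        rw [← hfst] at h1
        have h2 := hab'
        rw [← hfst] at h2
        have heval := fC_eval_move hex' h1 h2
        have hff : Nat.find h2 = Nat.find hab := by
          apply find_congr _ h2 hab
          intro m
          rw [hfst]
          exact hpred m
        rw [hff] at heval
        rw [hfst] at heval
        rw [← habdef] at heval
        exact heval
      refine ⟨_, _, heT, heT', ?_⟩
      apply swapRel_images h
      · intro b v hv
        by_cases hb : b = bx
        · subst hb
          rw [Function.update_self]
          exact mem_small_ins (by omega) hv
        · rw [Function.update_of_ne hb]
          by_cases hb2 : b = ab
          · subst hb2
            rw [Function.update_self]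
            exact mem_small_erase (by omega) hv
          · rw [Function.update_of_ne hb2]
      · intro b hbxy
        by_cases hb : b = bx
        · subst hb
          rw [Function.update_self, Function.update_self, (h.updErase).2 _ hbxy]
        · rw [Function.update_of_ne hb, Function.update_of_ne hb]
          by_cases hb2 : b = ab
          · subst hb2
            rw [Function.update_self, Function.update_self, (h.updErase).2 _ hbxy]
          · rw [Function.update_of_ne hb2, Function.update_of_ne hb2,
              (h.updErase).2 _ hbxy]
      · by_cases hxybx : xy = bx
        · have e1 : T' bx = insert 1 ((T bx).erase 2) := by
            rw [← hxybx]; exact (h.updErase).1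
          rw [hxybx, Function.update_self, Function.update_self, e1]
          exact fs_ins (by omega)
        · rw [Function.update_of_ne hxybx, Function.update_of_ne hxybx]
          by_cases hxyab : xy = ab
          · have e1 : T' ab = insert 1 ((T ab).erase 2) := by
              rw [← hxyab]; exact (h.updErase).1
            rw [hxyab, Function.update_self, Function.update_self, e1]
            exact fs_erase (by omega)
          · rw [Function.update_of_ne hxyab, Function.update_of_ne hxyab,
              (h.updErase).1]
    · left
      have hab' : ¬ ∃ m, boxIdx lam bx < m ∧ m < (revrowBoxes lam).length ∧
          i ∈ T' ((revrowBoxes lam).getD m (0, 0)) ∧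
          i + 1 ∈ T' ((revrowBoxes lam).getD m (0, 0)) :=
        fun hc => hab (hc.imp (fun m hm => (hpred m).mp hm))
      constructor
      · have h1 := htab
        have h2 := hab
        rw [hbxdef] at h1 h2
        exact fC_eval_nomove hex h1 h2
      · have h1 := htab'
        have h2 := hab'
        rw [← hfst] at h1 h2
        exact fC_eval_nomove hex' h1 h2
/-! ### String lengths and commutation -/

lemma swapRel_iter_e {lam : List ℕ} {xy : ℕ × ℕ} {i : ℕ} (hi : 3 ≤ i) :
    ∀ (k : ℕ) {T T' : ℕ × ℕ → Finset ℕ}, SwapRel lam xy T T' →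
    (iterOpt (eCrystal lam i) k T = none ↔ iterOpt (eCrystal lam i) k T' = none) := by
  intro k
  induction k with
  | zero => intro T T' _; simp [iterOpt]
  | succ k ih =>
    intro T T' h
    rcases swapRel_eCrystal hi h with ⟨h1, h2⟩ | ⟨V, V', hV, hV', hrel⟩
    · show (eCrystal lam i T).bind _ = none ↔ (eCrystal lam i T').bind _ = none
      rw [h1, h2]
    · show (eCrystal lam i T).bind _ = none ↔ (eCrystal lam i T').bind _ = none
      rw [hV, hV']
      simpa using ih hrel

lemma swapRel_iter_f {lam : List ℕ} {xy : ℕ × ℕ} {i : ℕ} (hi : 3 ≤ i) :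
    ∀ (k : ℕ) {T T' : ℕ × ℕ → Finset ℕ}, SwapRel lam xy T T' →
    (iterOpt (fCrystal lam i) k T = none ↔ iterOpt (fCrystal lam i) k T' = none) := by
  intro k
  induction k with
  | zero => intro T T' _; simp [iterOpt]
  | succ k ih =>
    intro T T' h
    rcases swapRel_fCrystal hi h with ⟨h1, h2⟩ | ⟨V, V', hV, hV', hrel⟩
    · show (fCrystal lam i T).bind _ = none ↔ (fCrystal lam i T').bind _ = none
      rw [h1, h2]
    · show (fCrystal lam i T).bind _ = none ↔ (fCrystal lam i T').bind _ = none
      rw [hV, hV']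
      simpa using ih hrel

lemma swapRel_strlen_e {lam : List ℕ} {xy : ℕ × ℕ} {i : ℕ} (hi : 3 ≤ i)
    {T T' : ℕ × ℕ → Finset ℕ} (h : SwapRel lam xy T T') (m : ℕ) :
    HasStringLen (eCrystal lam i) T m ↔ HasStringLen (eCrystal lam i) T' m := by
  unfold HasStringLen
  exact and_congr (not_congr (swapRel_iter_e hi m h)) (swapRel_iter_e hi (m+1) h)

lemma swapRel_strlen_f {lam : List ℕ} {xy : ℕ × ℕ} {i : ℕ} (hi : 3 ≤ i)
    {T T' : ℕ × ℕ → Finset ℕ} (h : SwapRel lam xy T T') (m : ℕ) :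
    HasStringLen (fCrystal lam i) T m ↔ HasStringLen (fCrystal lam i) T' m := by
  unfold HasStringLen
  exact and_congr (not_congr (swapRel_iter_f hi m h)) (swapRel_iter_f hi (m+1) h)

/-! ### Constructors for SwapRel from box data -/

lemma swapRel_of_E {lam : List ℕ} {T : ℕ × ℕ → Finset ℕ} {xy : ℕ × ℕ}
    (hmem : xy ∈ revrowBoxes lam) (h2 : 2 ∈ T xy) (h1 : 1 ∉ T xy)
    (hbef : ∀ b ∈ revrowBoxes lam, boxBefore b xy → 1 ∉ T b ∧ 2 ∉ T b)
    (h0 : ∀ b ∈ revrowBoxes lam, 0 ∉ T b) :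
    SwapRel lam xy T (Function.update T xy (insert 1 ((T xy).erase 2))) := by
  refine ⟨hmem, hbef, h0, h2, h1, ?_, rfl⟩
  intro v hv hv2
  have hv1 : v ≠ 1 := fun e => h1 (e ▸ hv)
  have hv0 : v ≠ 0 := fun e => h0 xy hmem (e ▸ hv)
  omega

lemma swapRel_of_F {lam : List ℕ} {T : ℕ × ℕ → Finset ℕ} {xy : ℕ × ℕ}
    (hmem : xy ∈ revrowBoxes lam) (h1 : 1 ∈ T xy) (h2 : 2 ∉ T xy)
    (hbef : ∀ b ∈ revrowBoxes lam, boxBefore b xy → 1 ∉ T b ∧ 2 ∉ T b)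
    (h0 : ∀ b ∈ revrowBoxes lam, 0 ∉ T b) :
    SwapRel lam xy (Function.update T xy (insert 2 ((T xy).erase 1))) T := by
  have hUxy : Function.update T xy (insert 2 ((T xy).erase 1)) xy
      = insert 2 ((T xy).erase 1) := Function.update_self _ _ _
  refine ⟨hmem, ?_, ?_, ?_, ?_, ?_, ?_⟩
  · intro b hb hbb
    rw [Function.update_of_ne (by rintro rfl; exact boxBefore_irrefl _ hbb)]
    exact hbef b hb hbb
  · intro b hb
    by_cases hbxy : b = xy
    · subst hbxy
      rw [hUxy]
      intro hc
      rcases Finset.mem_insert.mp hc with hc | hc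
      · omega
      · exact h0 b hb (Finset.mem_of_mem_erase hc)
    · rw [Function.update_of_ne hbxy]
      exact h0 b hb
  · rw [hUxy]; exact Finset.mem_insert_self _ _
  · rw [hUxy]
    intro hc
    rcases Finset.mem_insert.mp hc with hc | hc
    · omega
    · exact (Finset.mem_erase.mp hc).1 rfl
  · rw [hUxy]
    intro v hv hv2
    rcases Finset.mem_insert.mp hv with rfl | hv
    · omega
    · have hv1 := (Finset.mem_erase.mp hv).1
      have hvT := Finset.mem_of_mem_erase hv
      have hv0 : v ≠ 0 := fun e => h0 xy hmem (e ▸ hvT)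
      have hv2' : v ≠ 2 := fun e => h2 (e ▸ hvT)
      omega
  · funext z
    by_cases hz : z = xy
    · subst hz
      rw [Function.update_self, hUxy, swapback2 h1 h2]
    · rw [Function.update_of_ne hz, Function.update_of_ne hz]

/-! ### Transfer of `none` along membership-equal tableaux -/

lemma ebar_none_transfer {lam : List ℕ} {T V : ℕ × ℕ → Finset ℕ}
    (h0T : ∀ b ∈ revrowBoxes lam, 0 ∉ T b) (h0V : ∀ b ∈ revrowBoxes lam, 0 ∉ V b)
    (hmm : ∀ b, (1 ∈ V b ↔ 1 ∈ T b) ∧ (2 ∈ V b ↔ 2 ∈ T b))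
    (hnone : eBarCrystal lam T = none) : eBarCrystal lam V = none := by
  cases heq : eBarCrystal lam V with
  | none => rfl
  | some W =>
    obtain ⟨xy, hrel⟩ := ebar_some_spec h0V heq
    have : SwapRel lam xy T (Function.update T xy (insert 1 ((T xy).erase 2))) := by
      apply swapRel_of_E hrel.1 ((hmm xy).2.mp hrel.2.2.2.1)
        (fun hc => hrel.2.2.2.2.1 ((hmm xy).1.mpr hc)) ?_ h0T
      intro b hb hbb
      have := hrel.2.1 b hb hbb
      exact ⟨fun hc => this.1 ((hmm b).1.mpr hc), fun hc => this.2 ((hmm b).2.mpr hc)⟩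
    rw [ebar_some_of_swapRel this] at hnone
    exact absurd hnone (by simp)

lemma fbar_none_transfer {lam : List ℕ} {T V : ℕ × ℕ → Finset ℕ}
    (h0T : ∀ b ∈ revrowBoxes lam, 0 ∉ T b) (h0V : ∀ b ∈ revrowBoxes lam, 0 ∉ V b)
    (hmm : ∀ b, (1 ∈ V b ↔ 1 ∈ T b) ∧ (2 ∈ V b ↔ 2 ∈ T b))
    (hnone : fBarCrystal lam T = none) : fBarCrystal lam V = none := by
  cases heq : fBarCrystal lam V with
  | none => rfl
  | some W =>
    obtain ⟨xy, hrel⟩ := fbar_some_spec h0V heq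
    obtain ⟨hbef', h0', h1', h2', h3', hVeq⟩ := hrel.mirror
    have : SwapRel lam xy (Function.update T xy (insert 2 ((T xy).erase 1))) T := by
      apply swapRel_of_F hrel.1 ((hmm xy).1.mp h1') (fun hc => h2' ((hmm xy).2.mpr hc))
        ?_ h0T
      intro b hb hbb
      have := hbef' b hb hbb
      exact ⟨fun hc => this.1 ((hmm b).1.mpr hc), fun hc => this.2 ((hmm b).2.mpr hc)⟩
    rw [fbar_some_of_swapRel this] at hnone
    exact absurd hnone (by simp)
/-! ### Small membership preservation by the gl operators -/

lemma eC_mem_small {lam : List ℕ} {i : ℕ} {T V : ℕ × ℕ → Finset ℕ} (hi : 3 ≤ i)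
    (h : eCrystal lam i T = some V) : ∀ b, ∀ v ≤ 2, (v ∈ V b ↔ v ∈ T b) := by
  by_cases hex : ∃ p, UnpairedHigh i (revrowWord lam T) p
  swap
  · rw [eC_eval_none hex] at h; exact absurd h (by simp)
  set bx := ((revrowEntries lam T).getD (Nat.find hex) ((0, 0), 0)).1 with hbxdef
  by_cases htab : IsSetDecompTab lam (Function.update T bx (insert i ((T bx).erase (i+1))))
  · have heval : eCrystal lam i T =
        some (Function.update T bx (insert i ((T bx).erase (i+1)))) := by
      have h1 := htab
      rw [hbxdef] at h1 ⊢
      exact eC_eval_inplace hex h1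
    rw [heval] at h
    have hV := Option.some.inj h
    subst hV
    intro b v hv
    by_cases hb : b = bx
    · subst hb
      rw [Function.update_self]
      exact mem_small_ins_erase (by omega) (by omega) hv
    · rw [Function.update_of_ne hb]
  · by_cases hab : ∃ m, m < boxIdx lam bx ∧ i ∈ T ((revrowBoxes lam).getD m (0, 0)) ∧
        i + 1 ∈ T ((revrowBoxes lam).getD m (0, 0))
    · set ab := (revrowBoxes lam).getD (Nat.findGreatest (fun m => m < boxIdx lam bx ∧
          i ∈ T ((revrowBoxes lam).getD m (0, 0)) ∧
          i + 1 ∈ T ((revrowBoxes lam).getD m (0, 0))) (boxIdx lam bx)) (0, 0) with habdef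
      have heval : eCrystal lam i T = some (Function.update
          (Function.update T ab ((T ab).erase (i + 1))) bx (insert i (T bx))) := by
        have h1 := htab
        have h2 := hab
        rw [habdef, hbxdef]
        rw [hbxdef] at h1 h2
        exact eC_eval_move hex h1 h2
      rw [heval] at h
      have hV := Option.some.inj h
      subst hV
      intro b v hv
      by_cases hb : b = bx
      · subst hb
        rw [Function.update_self]
        exact mem_small_ins (by omega) hv
      · rw [Function.update_of_ne hb]
        by_cases hb2 : b = ab
        · subst hb2
          rw [Function.update_self]
          exact mem_small_erase (by omega) hv
        · rw [Function.update_of_ne hb2]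
    · have heval : eCrystal lam i T = none := by
        have h1 := htab
        have h2 := hab
        rw [hbxdef] at h1 h2
        exact eC_eval_nomove hex h1 h2
      rw [heval] at h
      exact absurd h (by simp)

lemma fC_mem_small {lam : List ℕ} {i : ℕ} {T V : ℕ × ℕ → Finset ℕ} (hi : 3 ≤ i)
    (h : fCrystal lam i T = some V) : ∀ b, ∀ v ≤ 2, (v ∈ V b ↔ v ∈ T b) := by
  by_cases hex : ∃ p, UnpairedLow i (revrowWord lam T) p
  swap
  · rw [fC_eval_none hex] at h; exact absurd h (by simp)
  set bx := ((revrowEntries lam T).getD (Nat.findGreatest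
      (fun p => UnpairedLow i (revrowWord lam T) p)
      (revrowWord lam T).length) ((0, 0), 0)).1 with hbxdef
  by_cases htab : IsSetDecompTab lam (Function.update T bx (insert (i+1) ((T bx).erase i)))
  · have heval : fCrystal lam i T =
        some (Function.update T bx (insert (i+1) ((T bx).erase i))) := by
      have h1 := htab
      rw [hbxdef] at h1 ⊢
      exact fC_eval_inplace hex h1
    rw [heval] at h
    have hV := Option.some.inj h
    subst hV
    intro b v hv
    by_cases hb : b = bx
    · subst hb
      rw [Function.update_self]
      exact mem_small_ins_erase (by omega) (by omega) hv
    · rw [Function.update_of_ne hb]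
  · by_cases hab : ∃ m, boxIdx lam bx < m ∧ m < (revrowBoxes lam).length ∧
        i ∈ T ((revrowBoxes lam).getD m (0, 0)) ∧
        i + 1 ∈ T ((revrowBoxes lam).getD m (0, 0))
    · set ab := (revrowBoxes lam).getD (Nat.find hab) (0, 0) with habdef
      have heval : fCrystal lam i T = some (Function.update
          (Function.update T ab ((T ab).erase i)) bx (insert (i+1) (T bx))) := by
        have h1 := htab
        rw [hbxdef] at h1
        have h2 := hab
        rw [hbxdef] at h2
        have heval' := fC_eval_move hex h1 h2
        have hff : Nat.find h2 = Nat.find hab := by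
          apply find_congr _ h2 hab
          intro m
          rw [hbxdef]
        rw [hff] at heval'
        rw [← hbxdef] at heval'
        rw [← habdef] at heval'
        exact heval'
      rw [heval] at h
      have hV := Option.some.inj h
      subst hV
      intro b v hv
      by_cases hb : b = bx
      · subst hb
        rw [Function.update_self]
        exact mem_small_ins (by omega) hv
      · rw [Function.update_of_ne hb]
        by_cases hb2 : b = ab
        · subst hb2
          rw [Function.update_self]
          exact mem_small_erase (by omega) hv
        · rw [Function.update_of_ne hb2]
    · have heval : fCrystal lam i T = none := by
        have h1 := htab
        have h2 := hab
        rw [hbxdef] at h1 h2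
        exact fC_eval_nomove hex h1 h2
      rw [heval] at h
      exact absurd h (by simp)

/-! ### The four commutation identities -/

section comm
variable {lam : List ℕ} {i : ℕ} {T : ℕ × ℕ → Finset ℕ}

lemma comm_eE (hi : 3 ≤ i) (h0T : ∀ b ∈ revrowBoxes lam, 0 ∉ T b) :
    (eCrystal lam i T).bind (eBarCrystal lam) =
      (eBarCrystal lam T).bind (eCrystal lam i) := by
  cases hbar : eBarCrystal lam T with
  | none =>
    cases hec : eCrystal lam i T with
    | none => rfl
    | some V =>
      show eBarCrystal lam V = none
      have hm := eC_mem_small hi hec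
      exact ebar_none_transfer h0T
        (fun b hb hc => h0T b hb ((hm b 0 (by omega)).mp hc))
        (fun b => ⟨hm b 1 (by omega), hm b 2 (by omega)⟩) hbar
  | some U =>
    obtain ⟨xy, hrel⟩ := ebar_some_spec h0T hbar
    rcases swapRel_eCrystal hi hrel with ⟨h1, h2⟩ | ⟨V, V', hV, hV', hrelV⟩
    · rw [h1]
      exact h2.symm
    · rw [hV]
      show eBarCrystal lam V = (some U).bind (eCrystal lam i)
      rw [ebar_some_of_swapRel hrelV]
      exact hV'.symm

lemma comm_fE (hi : 3 ≤ i) (h0T : ∀ b ∈ revrowBoxes lam, 0 ∉ T b) :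
    (fCrystal lam i T).bind (eBarCrystal lam) =
      (eBarCrystal lam T).bind (fCrystal lam i) := by
  cases hbar : eBarCrystal lam T with
  | none =>
    cases hec : fCrystal lam i T with
    | none => rfl
    | some V =>
      show eBarCrystal lam V = none
      have hm := fC_mem_small hi hec
      exact ebar_none_transfer h0T
        (fun b hb hc => h0T b hb ((hm b 0 (by omega)).mp hc))
        (fun b => ⟨hm b 1 (by omega), hm b 2 (by omega)⟩) hbar
  | some U =>
    obtain ⟨xy, hrel⟩ := ebar_some_spec h0T hbar
    rcases swapRel_fCrystal hi hrel with ⟨h1, h2⟩ | ⟨V, V', hV, hV', hrelV⟩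
    · rw [h1]
      exact h2.symm
    · rw [hV]
      show eBarCrystal lam V = (some U).bind (fCrystal lam i)
      rw [ebar_some_of_swapRel hrelV]
      exact hV'.symm

lemma comm_eF (hi : 3 ≤ i) (h0T : ∀ b ∈ revrowBoxes lam, 0 ∉ T b) :
    (eCrystal lam i T).bind (fBarCrystal lam) =
      (fBarCrystal lam T).bind (eCrystal lam i) := by
  cases hbar : fBarCrystal lam T with
  | none =>
    cases hec : eCrystal lam i T with
    | none => rfl
    | some V =>
      show fBarCrystal lam V = none
      have hm := eC_mem_small hi hec
      exact fbar_none_transfer h0T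
        (fun b hb hc => h0T b hb ((hm b 0 (by omega)).mp hc))
        (fun b => ⟨hm b 1 (by omega), hm b 2 (by omega)⟩) hbar
  | some U =>
    obtain ⟨xy, hrel⟩ := fbar_some_spec h0T hbar
    rcases swapRel_eCrystal hi hrel with ⟨h1, h2⟩ | ⟨V, V', hV, hV', hrelV⟩
    · rw [h2]
      exact h1.symm
    · rw [hV']
      show fBarCrystal lam V' = (some U).bind (eCrystal lam i)
      rw [fbar_some_of_swapRel hrelV]
      exact hV.symm

lemma comm_fF (hi : 3 ≤ i) (h0T : ∀ b ∈ revrowBoxes lam, 0 ∉ T b) :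
    (fCrystal lam i T).bind (fBarCrystal lam) =
      (fBarCrystal lam T).bind (fCrystal lam i) := by
  cases hbar : fBarCrystal lam T with
  | none =>
    cases hec : fCrystal lam i T with
    | none => rfl
    | some V =>
      show fBarCrystal lam V = none
      have hm := fC_mem_small hi hec
      exact fbar_none_transfer h0T
        (fun b hb hc => h0T b hb ((hm b 0 (by omega)).mp hc))
        (fun b => ⟨hm b 1 (by omega), hm b 2 (by omega)⟩) hbar
  | some U =>
    obtain ⟨xy, hrel⟩ := fbar_some_spec h0T hbar
    rcases swapRel_fCrystal hi hrel with ⟨h1, h2⟩ | ⟨V, V', hV, hV', hrelV⟩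
    · rw [h2]
      exact h1.symm
    · rw [hV']
      show fBarCrystal lam V' = (some U).bind (fCrystal lam i)
      rw [fbar_some_of_swapRel hrelV]
      exact hV.symm

end comm
/-- Theorem 3.2 of the paper, queer part: the seminormal
`gl_n`-crystal `SetDecTab_n(λ)` together with `e_1̄, f_1̄` is a `q_n`-crystal. -/
theorem stmt9 (n : ℕ) (hn : 2 ≤ n) (lam : List ℕ) (hlam : IsStrictPartition lam)
    (hlen : lam.length ≤ n) :
    -- `e_1̄`, `f_1̄` map `SetDecTab_n(λ)` into `SetDecTab_n(λ) ⊔ {0}`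
    (∀ T, IsSetDecompTabN n lam T →
      (∀ U, eBarCrystal lam T = some U → IsSetDecompTabN n lam U) ∧
      (∀ U, fBarCrystal lam T = some U → IsSetDecompTabN n lam U)) ∧
    -- they commute with `e_i`, `f_i` for all `3 ≤ i ≤ n-1`
    (∀ i, 3 ≤ i → i < n → ∀ T, IsSetDecompTabN n lam T →
      (eCrystal lam i T).bind (eBarCrystal lam) =
        (eBarCrystal lam T).bind (eCrystal lam i) ∧
      (fCrystal lam i T).bind (eBarCrystal lam) =
        (eBarCrystal lam T).bind (fCrystal lam i) ∧
      (eCrystal lam i T).bind (fBarCrystal lam) =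
        (fBarCrystal lam T).bind (eCrystal lam i) ∧
      (fCrystal lam i T).bind (fBarCrystal lam) =
        (fBarCrystal lam T).bind (fCrystal lam i)) ∧
    -- and preserve the string lengths `ε_i`, `φ_i` for all `3 ≤ i ≤ n-1`
    (∀ i, 3 ≤ i → i < n → ∀ T U, IsSetDecompTabN n lam T →
      (eBarCrystal lam T = some U ∨ fBarCrystal lam T = some U) →
      (∀ m, HasStringLen (eCrystal lam i) T m ↔ HasStringLen (eCrystal lam i) U m) ∧
      (∀ m, HasStringLen (fCrystal lam i) T m ↔ HasStringLen (fCrystal lam i) U m)) ∧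
    -- `e_1̄(T) = U` iff `f_1̄(U) = T`
    (∀ T U, IsSetDecompTabN n lam T → IsSetDecompTabN n lam U →
      (eBarCrystal lam T = some U ↔ fBarCrystal lam U = some T)) ∧
    -- in which case `wt(U) = wt(T) + 𝐞_1 - 𝐞_2`
    (∀ T U, IsSetDecompTabN n lam T → eBarCrystal lam T = some U →
      ∀ k, (wtSet lam U k : ℤ) - wtSet lam T k =
        (if k = 1 then 1 else 0) - (if k = 2 then 1 else 0)) := by
  refine ⟨?_, ?_, ?_, ?_, ?_⟩
  · intro T hT
    exact ⟨fun U hU => ebar_preserves hn hT hU, fun U hU => fbar_preserves hn hT hU⟩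
  · intro i hi3 _hin T hT
    exact ⟨comm_eE hi3 (h0_of_tab hT), comm_fE hi3 (h0_of_tab hT),
      comm_eF hi3 (h0_of_tab hT), comm_fF hi3 (h0_of_tab hT)⟩
  · intro i hi3 _hin T U hT hbar
    rcases hbar with hbar | hbar
    · obtain ⟨xy, hrel⟩ := ebar_some_spec (h0_of_tab hT) hbar
      exact ⟨swapRel_strlen_e hi3 hrel, swapRel_strlen_f hi3 hrel⟩
    · obtain ⟨xy, hrel⟩ := fbar_some_spec (h0_of_tab hT) hbar
      exact ⟨fun m => (swapRel_strlen_e hi3 hrel m).symm,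
        fun m => (swapRel_strlen_f hi3 hrel m).symm⟩
  · intro T U hT hU
    exact bullet4 hT hU
  · intro T U hT h
    exact bullet5 hT h
end

section
/- Every √gl_n-crystal B is a gl_n-crystal with respect to the same weight map and the squared operators (e'_i)² and (f'_i)² for i ∈ [n−1] (with the convention e'_i(0) = f'_i(0) = 0), and this gl_n-crystal is seminormal. Likewise, every √q_n-crystal is a q_n-crystal with respect to the squared operators (e'_i)² and (f'_i)² for i ∈ {1̄, 1, 2, …, n−1}. -/
open scoped Classical

/-! ### Auxiliary lemmas for `stmt13` -/

section Stmt13Aux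

variable {B : Type*} {g h : B → Option B} {a b c : B} {k l m m' ep : ℕ}

lemma iterOpt_succ_eq (g : B → Option B) (k : ℕ) (a : B) :
    iterOpt g (k + 1) a = (g a).bind (iterOpt g k) := rfl

lemma iterOpt_succ' (g : B → Option B) (k : ℕ) (a : B) :
    iterOpt g (k + 1) a = (iterOpt g k a).bind g := by
  induction k generalizing a with
  | zero =>
    rw [iterOpt_succ_eq]
    cases hga : g a <;> simp [iterOpt, hga]
  | succ k ih =>
    rw [iterOpt_succ_eq, iterOpt_succ_eq]
    cases hga : g a with
    | none => simp
    | some b => simp [ih b]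

lemma iterOpt_none_mono (hk : iterOpt g k a = none) (hkl : k ≤ l) :
    iterOpt g l a = none := by
  induction l, hkl using Nat.le_induction with
  | base => exact hk
  | succ n hn ih => rw [iterOpt_succ', ih]; rfl

lemma hasStringLen_unique (h1 : HasStringLen g a m) (h2 : HasStringLen g a m') :
    m = m' := by
  by_contra hne
  rcases Nat.lt_or_ge m m' with hlt | hge
  · exact h2.1 (iterOpt_none_mono h1.2 hlt)
  · exact h1.1 (iterOpt_none_mono h2.2 (by omega))

lemma iterOpt_sq (g : B → Option B) (k : ℕ) (a : B) :
    iterOpt (sqOp g) k a = iterOpt g (2 * k) a := by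
  induction k generalizing a with
  | zero => rfl
  | succ k ih =>
    have h2 : 2 * (k + 1) = (2 * k + 1) + 1 := by ring
    rw [h2, iterOpt_succ_eq, iterOpt_succ_eq]
    rw [show sqOp g a = (g a).bind g from rfl]
    cases hga : g a with
    | none => simp
    | some b =>
      simp only [Option.bind_some]
      rw [iterOpt_succ_eq]
      cases hgb : g b with
      | none => simp
      | some c => simp [ih c]

lemma hasStringLen_shift (hg : g a = some b) (k : ℕ) :
    iterOpt g (k + 1) a = iterOpt g k b := by
  rw [iterOpt_succ_eq, hg]; rfl

lemma hasStringLen_succ (hg : g a = some b) :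
    HasStringLen g a (m + 1) ↔ HasStringLen g b m := by
  unfold HasStringLen
  rw [hasStringLen_shift hg, show m + 1 + 1 = (m + 1) + 1 from rfl,
    hasStringLen_shift hg]

lemma hsl_pos (hg : g a = some b) (hm : HasStringLen g a m) : 1 ≤ m := by
  rcases m with - | m
  · exact absurd hm.2 (by rw [hasStringLen_shift hg]; simp [iterOpt])
  · omega

lemma hasStringLen_sq (hm : HasStringLen g a m) :
    HasStringLen (sqOp g) a (m / 2) := by
  constructor
  · rw [iterOpt_sq]
    exact fun hn => hm.1 (iterOpt_none_mono hn (by omega))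
  · rw [iterOpt_sq]
    exact iterOpt_none_mono hm.2 (by omega)

lemma sq_some (hb : sqOp g b = some c) :
    ∃ b1, g b = some b1 ∧ g b1 = some c := by
  unfold sqOp at hb
  cases hg : g b with
  | none => rw [hg] at hb; simp at hb
  | some b1 =>
    rw [hg] at hb
    exact ⟨b1, rfl, by simpa using hb⟩

lemma sq_mk (h1 : g b = some a) (h2 : g a = some c) : sqOp g b = some c := by
  unfold sqOp; rw [h1]; simpa using h2

lemma sq_iff (H : ∀ b c, g b = some c ↔ h c = some b) (b c : B) :
    sqOp g b = some c ↔ sqOp h c = some b := by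
  constructor
  · intro hb
    obtain ⟨b1, h1, h2⟩ := sq_some hb
    exact sq_mk ((H b1 c).mp h2) ((H b b1).mp h1)
  · intro hc
    obtain ⟨b1, h1, h2⟩ := sq_some hc
    exact sq_mk ((H b b1).mpr h2) ((H b1 c).mpr h1)

lemma sq_len_pres (ep : ℕ) (hb : HasStringLen g b ep) (hc : HasStringLen g c ep)
    (m : ℕ) : HasStringLen (sqOp g) b m ↔ HasStringLen (sqOp g) c m := by
  constructor
  · intro hm
    have := hasStringLen_unique hm (hasStringLen_sq hb)
    exact this ▸ hasStringLen_sq hc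
  · intro hm
    have := hasStringLen_unique hm (hasStringLen_sq hc)
    exact this ▸ hasStringLen_sq hb

lemma sq_commute (H : ∀ b, (g b).bind h = (h b).bind g) (b : B) :
    (sqOp g b).bind (sqOp h) = (sqOp h b).bind (sqOp g) := by
  have H' : (fun x => (g x).bind h) = fun x => (h x).bind g := funext H
  have swap : ∀ o : Option B, (o.bind g).bind h = (o.bind h).bind g := by
    intro o; rw [Option.bind_assoc, Option.bind_assoc, H']
  have e1 : ∀ o : Option B, o.bind (sqOp h) = (o.bind h).bind h := by
    intro o; rw [Option.bind_assoc]; rfl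
  have e2 : ∀ o : Option B, o.bind (sqOp g) = (o.bind g).bind g := by
    intro o; rw [Option.bind_assoc]; rfl
  show ((g b).bind g).bind (sqOp h) = ((h b).bind h).bind (sqOp g)
  rw [e1, e2, swap (g b), swap ((g b).bind h), H b, swap (h b)]

lemma glPart {B : Type*} (n : ℕ) (D : SqGlData B) (h : IsSqGlCrystal n D) :
    GlSeminormalAxioms n D.wt (fun i => sqOp (D.e i)) (fun i => sqOp (D.f i)) := by
  obtain ⟨hlen, hef, hwt⟩ := h
  refine ⟨fun i h1 h2 b c => sq_iff (hef i h1 h2) b c, ?_, ?_⟩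
  · intro i h1 h2 b c hbc k
    obtain ⟨b1, hb, hb1⟩ := sq_some hbc
    obtain ⟨ep, -, heb, -, -, -⟩ := hlen i h1 h2 b
    have hp1 : 1 ≤ ep := hsl_pos hb heb
    have heb1 : HasStringLen (D.e i) b1 (ep - 1) :=
      (hasStringLen_succ hb).mp (by rw [show ep - 1 + 1 = ep from by omega]; exact heb)
    have hp2 : 1 ≤ ep - 1 := hsl_pos hb1 heb1
    have w1 := hwt i h1 h2 b b1 hb ep heb k
    have w2 := hwt i h1 h2 b1 c hb1 (ep - 1) heb1 k
    rcases Nat.even_or_odd ep with hev | hodd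
    · have hno : ¬ Even (ep - 1) := by
        rw [Nat.even_iff] at hev ⊢; omega
      rw [if_pos hev] at w1
      rw [if_neg hno] at w2
      split_ifs at w1 w2 ⊢ <;> omega
    · have hye : Even (ep - 1) := by
        rw [Nat.odd_iff] at hodd; rw [Nat.even_iff]; omega
      have hno : ¬ Even ep := by
        rw [Nat.odd_iff] at hodd; rw [Nat.even_iff]; omega
      rw [if_neg hno] at w1
      rw [if_pos hye] at w2
      split_ifs at w1 w2 ⊢ <;> omega
  · intro i h1 h2 b
    obtain ⟨ep, ph, heb, hfb, hev, heq⟩ := hlen i h1 h2 b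
    refine ⟨ep / 2, ph / 2, hasStringLen_sq heb, hasStringLen_sq hfb, ?_⟩
    rw [Nat.even_iff] at hev
    omega

end Stmt13Aux

/-- Proposition 3.9 of the paper: every `√gl_n`-crystal is a
seminormal `gl_n`-crystal for the squared operators `(e'_i)²`, `(f'_i)²`, and every
`√q_n`-crystal is a `q_n`-crystal for the squared operators (including `(e'_1̄)²`,
`(f'_1̄)²`). -/
theorem stmt13 :
    (∀ (n : ℕ) (B : Type) (D : SqGlData B), IsSqGlCrystal n D →
      GlSeminormalAxioms n D.wt (fun i => sqOp (D.e i)) (fun i => sqOp (D.f i))) ∧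
    (∀ (n : ℕ) (B : Type) (D : SqQData B), IsSqQnCrystal n D →
      GlSeminormalAxioms n D.wt (fun i => sqOp (D.e i)) (fun i => sqOp (D.f i)) ∧
      QnExtraAxioms n D.wt (fun i => sqOp (D.e i)) (fun i => sqOp (D.f i))
        (sqOp D.ebar) (sqOp D.fbar)) := by
  constructor
  · intro n B D h
    exact glPart n D h
  · intro n B D h
    obtain ⟨hgl, hcomm, hpres, hqlen, hbar, hqwt⟩ := h
    refine ⟨glPart n D.toSqGlData hgl, ?_, ?_, ?_, ?_⟩
    · intro i h3 hn b
      exact ⟨sq_commute (fun b => (hcomm i h3 hn b).1) b,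
        sq_commute (fun b => (hcomm i h3 hn b).2.1) b,
        sq_commute (fun b => (hcomm i h3 hn b).2.2.1) b,
        sq_commute (fun b => (hcomm i h3 hn b).2.2.2) b⟩
    · intro i h3 hn b c hor
      have key : (∀ m, HasStringLen (D.e i) b m ↔ HasStringLen (D.e i) c m) ∧
          (∀ m, HasStringLen (D.f i) b m ↔ HasStringLen (D.f i) c m) := by
        rcases hor with hsq | hsq <;> obtain ⟨b1, h1, h2⟩ := sq_some hsq
        · have p1 := hpres i h3 hn b b1 (Or.inl h1)
          have p2 := hpres i h3 hn b1 c (Or.inl h2)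
          exact ⟨fun m => (p1.1 m).trans (p2.1 m), fun m => (p1.2 m).trans (p2.2 m)⟩
        · have p1 := hpres i h3 hn b b1 (Or.inr h1)
          have p2 := hpres i h3 hn b1 c (Or.inr h2)
          exact ⟨fun m => (p1.1 m).trans (p2.1 m), fun m => (p1.2 m).trans (p2.2 m)⟩
      obtain ⟨ep, ph, heb, hfb, -, -⟩ := hgl.1 i (by omega) hn b
      have hec : HasStringLen (D.e i) c ep := (key.1 ep).mp heb
      have hfc : HasStringLen (D.f i) c ph := (key.2 ph).mp hfb
      exact ⟨sq_len_pres ep heb hec, sq_len_pres ph hfb hfc⟩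
    · exact fun b c => sq_iff hbar b c
    · intro b c hbc k
      obtain ⟨b1, h1, h2⟩ := sq_some hbc
      obtain ⟨ep, ph, heb, hfb, hsum⟩ := hqlen b
      have hp1 : 1 ≤ ep := hsl_pos h1 heb
      have heb1 : HasStringLen D.ebar b1 (ep - 1) :=
        (hasStringLen_succ h1).mp (by rw [show ep - 1 + 1 = ep from by omega]; exact heb)
      have hp2 : 1 ≤ ep - 1 := hsl_pos h2 heb1
      have hep2 : ep = 2 := by split_ifs at hsum <;> omega
      have heb1' : HasStringLen D.ebar b1 1 := by
        rw [show (1 : ℕ) = ep - 1 from by omega]; exact heb1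
      have w1 := hqwt b b1 h1 ep heb k
      have w2 := hqwt b1 c h2 1 heb1' k
      rw [if_pos hep2] at w1
      rw [if_neg (by omega : (1 : ℕ) ≠ 2)] at w2
      split_ifs at w1 w2 ⊢ <;> omega
end
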